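/- arXiv:1812.10458 — 3 statements merged into one kernel-verified Lean document; each statement's English description precedes it below -/
import Mathlib

section
/- Let (x_n)_{n≥1} be a sequence in [0,1) and suppose that for every s > 0, lim_{N→∞} (1/N)·#{(m,n) : 1 ≤ m ≠ n ≤ N, ‖x_m − x_n‖ ≤ s/N} = 2s, where ‖·‖ denotes the distance to the nearest integer. Then (x_n) is uniformly distributed in [0,1), i.e. for all 0 ≤ a < b ≤ 1, lim_{N→∞} (1/N)·#{1 ≤ n ≤ N : a ≤ x_n < b} = b − a. -/
open Filter

/-- Distance from a real number to the nearest integer. -/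
noncomputable def nint (x : ℝ) : ℝ := |x - round x|

section AuxPPC

open Finset

lemma window_iff {N s : ℕ} (hsN : s ≤ N) {y : ℝ} (hy : y ∈ Set.Ico (0:ℝ) 1)
    {i : ℕ} (hi : i < N) :
    (Int.fract (y - (i:ℝ)/N) < (s:ℝ)/N) ↔
      (((i:ℤ) ≤ ⌊(N:ℝ)*y⌋ ∧ ⌊(N:ℝ)*y⌋ < (i:ℤ) + s) ∨
       (⌊(N:ℝ)*y⌋ < (i:ℤ) ∧ ⌊(N:ℝ)*y⌋ + N < (i:ℤ) + s)) := by
  have hN0 : 0 < N := lt_of_le_of_lt (Nat.zero_le i) hi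
  have hNR : (0:ℝ) < N := by exact_mod_cast hN0
  set k := ⌊(N:ℝ)*y⌋ with hk
  have hk0 : 0 ≤ k := Int.floor_nonneg.mpr (mul_nonneg hNR.le hy.1)
  have hkN : k < N := by
    rw [hk, Int.floor_lt]; push_cast; nlinarith [hy.2]
  have hfl : (k:ℝ) ≤ N*y := Int.floor_le _
  have hfu : N*y < k + 1 := Int.lt_floor_add_one _
  by_cases hik : (i:ℤ) ≤ k
  · have hikR : (i:ℝ) ≤ k := by exact_mod_cast hik
    have hfr : Int.fract (y - (i:ℝ)/N) = y - (i:ℝ)/N := by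
      apply Int.fract_eq_self.mpr
      constructor
      · rw [sub_nonneg, div_le_iff₀ hNR]; nlinarith
      · have : (0:ℝ) ≤ (i:ℝ)/N := by positivity
        linarith [hy.2]
    rw [hfr]
    have e : y - (i:ℝ)/N = ((N:ℝ)*y - i)/N := by field_simp
    have key : y - (i:ℝ)/N < (s:ℝ)/N ↔ k < (i:ℤ) + s := by
      rw [e, div_lt_div_iff_of_pos_right hNR, sub_lt_iff_lt_add]
      rw [show ((s:ℝ) + i) = (((i:ℤ) + s : ℤ) : ℝ) by push_cast; ring, ← Int.floor_lt]
    rw [key]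
    constructor
    · intro h; exact Or.inl ⟨hik, h⟩
    · rintro (⟨_, h⟩ | ⟨h, _⟩)
      · exact h
      · omega
  · push_neg at hik
    have hyi : y < (i:ℝ)/N := by
      rw [lt_div_iff₀ hNR]
      have : ((k:ℤ):ℝ) + 1 ≤ (i:ℝ) := by exact_mod_cast Int.add_one_le_iff.mpr hik
      nlinarith
    have hfr : Int.fract (y - (i:ℝ)/N) = y - (i:ℝ)/N + 1 := by
      rw [← Int.fract_add_one (y - (i:ℝ)/N)]
      apply Int.fract_eq_self.mpr
      constructor
      · have : (i:ℝ)/N < 1 := by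
          rw [div_lt_one hNR]; exact_mod_cast hi
        linarith [hy.1]
      · linarith
    rw [hfr]
    have e : y - (i:ℝ)/N + 1 = ((N:ℝ)*y - i + N)/N := by field_simp
    have key : y - (i:ℝ)/N + 1 < (s:ℝ)/N ↔ k + N < (i:ℤ) + s := by
      rw [e, div_lt_div_iff_of_pos_right hNR, sub_add_eq_add_sub, sub_lt_iff_lt_add]
      rw [show ((s:ℝ) + i) = (((i:ℤ) + s - N + N : ℤ) : ℝ) - (N:ℝ) + (N:ℝ) by push_cast; ring]
      constructor
      · intro h
        have : (N:ℝ)*y < (((i:ℤ) + s - N : ℤ) : ℝ) := by push_cast at h ⊢; linarith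
        have := Int.floor_lt.mpr this
        omega
      · intro h
        have h2 : k < (i:ℤ) + s - N := by omega
        have := Int.floor_lt.mp h2
        push_cast at this ⊢; linarith
    rw [key]
    constructor
    · intro h; exact Or.inr ⟨hik, h⟩
    · rintro (⟨h, _⟩ | ⟨_, h⟩)
      · omega
      · exact h


def wpred (N s : ℕ) (k : ℤ) (i : ℕ) : Prop :=
  ((i:ℤ) ≤ k ∧ k < (i:ℤ) + s) ∨ (k < (i:ℤ) ∧ k + N < (i:ℤ) + s)

instance (N s : ℕ) (k : ℤ) (i : ℕ) : Decidable (wpred N s k i) := by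
  unfold wpred; infer_instance

lemma count_wpred {N s : ℕ} (hsN : s ≤ N) {k : ℤ} (hk0 : 0 ≤ k) (hkN : k < N) :
    ((Finset.range N).filter (wpred N s k)).card = s := by
  have key : ((Finset.range N).filter (wpred N s k)).card = (Finset.range s).card := by
    refine Finset.card_nbij'
      (fun i => if (i:ℤ) ≤ k then (k - i).toNat else (k + N - i).toNat)
      (fun j => if (j:ℤ) ≤ k then (k - j).toNat else (k + N - j).toNat)
      ?_ ?_ ?_ ?_
    · intro a ha
      simp only [Finset.mem_coe, Finset.mem_filter, Finset.mem_range, wpred] at ha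
      simp only [Finset.mem_coe, Finset.mem_range]
      split_ifs <;> omega
    · intro a ha
      simp only [Finset.mem_coe, Finset.mem_range] at ha
      simp only [Finset.mem_coe, Finset.mem_filter, Finset.mem_range, wpred]
      split_ifs <;> omega
    · intro a ha
      simp only [Finset.mem_coe, Finset.mem_filter, Finset.mem_range, wpred] at ha
      simp only []
      split_ifs <;> omega
    · intro a ha
      simp only [Finset.mem_coe, Finset.mem_range] at ha
      simp only []
      split_ifs <;> omega
  rwa [Finset.card_range] at key

lemma nint_le_abs_sub_int (w : ℝ) (j : ℤ) : nint w ≤ |w - j| := by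
  rw [nint, abs_sub_round_eq_min]
  have hf : ((⌊w⌋:ℝ)) + Int.fract w = w := Int.floor_add_fract w
  have h0 : 0 ≤ Int.fract w := Int.fract_nonneg w
  have h1 : Int.fract w < 1 := Int.fract_lt_one w
  rcases le_or_gt j ⌊w⌋ with ht | ht
  · have : ((j:ℝ)) ≤ ((⌊w⌋:ℝ)) := by exact_mod_cast ht
    have habs : |w - j| = w - j := abs_of_nonneg (by linarith)
    rw [habs]
    exact le_trans inf_le_left (by linarith)
  · have : ((⌊w⌋:ℝ)) + 1 ≤ ((j:ℝ)) := by exact_mod_cast Int.add_one_le_iff.mpr ht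
    have habs : |w - j| = -(w - j) := abs_of_neg (by linarith)
    rw [habs]
    exact le_trans inf_le_right (by linarith)

lemma nint_near {N : ℕ} (hN : 0 < N) (y z : ℝ) (j : ℤ) :
    nint (y - z) ≤ ((|⌊(N:ℝ)*y⌋ - ⌊(N:ℝ)*z⌋ - j*N| : ℤ) + 1 : ℝ)/N := by
  have hNR : (0:ℝ) < N := by exact_mod_cast hN
  have h1 : ((⌊(N:ℝ)*y⌋:ℝ)) + Int.fract ((N:ℝ)*y) = (N:ℝ)*y := Int.floor_add_fract _
  have h2 : ((⌊(N:ℝ)*z⌋:ℝ)) + Int.fract ((N:ℝ)*z) = (N:ℝ)*z := Int.floor_add_fract _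
  set B : ℤ := ⌊(N:ℝ)*y⌋ - ⌊(N:ℝ)*z⌋ - j*N with hB
  have e : y - z - (j:ℝ) = ((B:ℝ) + (Int.fract ((N:ℝ)*y) - Int.fract ((N:ℝ)*z)))/N := by
    rw [hB]; push_cast; rw [eq_div_iff hNR.ne']; linarith
  calc nint (y - z) ≤ |y - z - j| := nint_le_abs_sub_int _ _
    _ = |(B:ℝ) + (Int.fract ((N:ℝ)*y) - Int.fract ((N:ℝ)*z))| / N := by
        rw [e, abs_div, abs_of_pos hNR]
    _ ≤ ((|B|:ℤ) + 1 : ℝ)/N := by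
        gcongr
        calc |(B:ℝ) + (Int.fract ((N:ℝ)*y) - Int.fract ((N:ℝ)*z))|
            ≤ |(B:ℝ)| + |Int.fract ((N:ℝ)*y) - Int.fract ((N:ℝ)*z)| := abs_add_le _ _
          _ ≤ ((|B|:ℤ):ℝ) + 1 := by
              have := Int.fract_nonneg ((N:ℝ)*y)
              have := Int.fract_nonneg ((N:ℝ)*z)
              have := Int.fract_lt_one ((N:ℝ)*y)
              have := Int.fract_lt_one ((N:ℝ)*z)
              have habs : |Int.fract ((N:ℝ)*y) - Int.fract ((N:ℝ)*z)| ≤ 1 := by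
                rw [abs_le]; constructor <;> linarith
              have : |(B:ℝ)| = ((|B|:ℤ):ℝ) := by push_cast; rfl
              linarith [habs, this.ge, this.le]


lemma pair_card_aux {N s : ℕ} (hN : 2*s+2 ≤ N) {k₁ k₂ : ℤ}
    (h21 : k₂ ≤ k₁) (hk20 : 0 ≤ k₂) (hk1N : k₁ < N) :
    (((Finset.range N).filter (fun i => wpred N s k₁ i ∧ wpred N s k₂ i)).card : ℤ)
      ≤ max 0 (s - min (k₁ - k₂) (N - (k₁ - k₂))) := by
  set d : ℤ := k₁ - k₂ with hd
  by_cases hds : d < s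
  · have hcard : ((Finset.range N).filter (fun i => wpred N s k₁ i ∧ wpred N s k₂ i)).card
        ≤ (Finset.range (s - d).toNat).card := by
      refine Finset.card_le_card_of_injOn
        (fun i => if (i:ℤ) ≤ k₂ then (k₂ - i).toNat else (k₂ + N - i).toNat) ?_ ?_
      · intro a ha
        simp only [Finset.mem_coe, Finset.mem_filter, Finset.mem_range] at ha
        simp only [wpred] at ha
        simp only [Finset.mem_coe, Finset.mem_range]
        split_ifs <;> omega
      · intro a ha b hb hab
        simp only [Finset.coe_filter, Finset.mem_coe, Finset.mem_range, Set.mem_setOf_eq] at ha hb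
        simp only [wpred] at ha hb
        simp only [] at hab
        split_ifs at hab <;> omega
    rw [Finset.card_range] at hcard
    omega
  · by_cases hds2 : N - d < s
    · have hcard : ((Finset.range N).filter (fun i => wpred N s k₁ i ∧ wpred N s k₂ i)).card
          ≤ (Finset.range (s - (N - d)).toNat).card := by
        refine Finset.card_le_card_of_injOn
          (fun i => if (i:ℤ) ≤ k₁ then (k₁ - i).toNat else (k₁ + N - i).toNat) ?_ ?_
        · intro a ha
          simp only [Finset.mem_coe, Finset.mem_filter, Finset.mem_range] at ha
          simp only [wpred] at ha
          simp only [Finset.mem_coe, Finset.mem_range]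
          split_ifs <;> omega
        · intro a ha b hb hab
          simp only [Finset.coe_filter, Finset.mem_coe, Finset.mem_range, Set.mem_setOf_eq] at ha hb
          simp only [wpred] at ha hb
          simp only [] at hab
          split_ifs at hab <;> omega
      rw [Finset.card_range] at hcard
      omega
    · have hempty : ((Finset.range N).filter (fun i => wpred N s k₁ i ∧ wpred N s k₂ i)) = ∅ := by
        apply Finset.filter_false_of_mem
        intro i hi
        simp only [Finset.mem_range] at hi
        simp only [wpred]
        omega
      rw [hempty]
      simp

lemma floor_mem_bounds {N : ℕ} (hN : 0 < N) {y : ℝ} (hy : y ∈ Set.Ico (0:ℝ) 1) :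
    0 ≤ ⌊(N:ℝ)*y⌋ ∧ ⌊(N:ℝ)*y⌋ < N := by
  have hNR : (0:ℝ) < N := by exact_mod_cast hN
  constructor
  · exact Int.floor_nonneg.mpr (mul_nonneg hNR.le hy.1)
  · rw [Int.floor_lt]; push_cast; nlinarith [hy.2]

lemma pair_card {N s : ℕ} (hs : 1 ≤ s) (hN : 2*s+2 ≤ N) {y z : ℝ}
    (hy : y ∈ Set.Ico (0:ℝ) 1) (hz : z ∈ Set.Ico (0:ℝ) 1)
    (h21 : ⌊(N:ℝ)*z⌋ ≤ ⌊(N:ℝ)*y⌋) :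
    (((Finset.range N).filter (fun i : ℕ =>
        Int.fract (y - (i:ℝ)/N) < (s:ℝ)/N ∧ Int.fract (z - (i:ℝ)/N) < (s:ℝ)/N)).card)
    ≤ ((Finset.Icc 1 (s+1)).filter (fun t : ℕ => nint (y - z) ≤ (t:ℝ)/N)).card := by
  have hN0 : 0 < N := by omega
  have hsN : s ≤ N := by omega
  have hNR : (0:ℝ) < N := by exact_mod_cast hN0
  obtain ⟨hk10, hk1N⟩ := floor_mem_bounds hN0 hy
  obtain ⟨hk20, hk2N⟩ := floor_mem_bounds hN0 hz
  set k₁ := ⌊(N:ℝ)*y⌋ with hk1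
  set k₂ := ⌊(N:ℝ)*z⌋ with hk2
  set d : ℤ := k₁ - k₂ with hd
  set m : ℤ := min d ((N:ℤ) - d) with hm
  have hm0 : 0 ≤ m := by omega
  -- step 1: rewrite LHS filter
  have hfe : ((Finset.range N).filter (fun i : ℕ =>
        Int.fract (y - (i:ℝ)/N) < (s:ℝ)/N ∧ Int.fract (z - (i:ℝ)/N) < (s:ℝ)/N))
      = ((Finset.range N).filter (fun i => wpred N s k₁ i ∧ wpred N s k₂ i)) := by
    apply Finset.filter_congr
    intro i hi
    simp only [Finset.mem_range] at hi
    rw [window_iff hsN hy hi, window_iff hsN hz hi]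
    simp [wpred, hk1, hk2]
  -- step 2
  have hA : (((Finset.range N).filter (fun i => wpred N s k₁ i ∧ wpred N s k₂ i)).card : ℤ)
      ≤ max 0 ((s:ℤ) - m) := pair_card_aux hN h21 hk20 hk1N
  -- step 3 : nint bound
  have hnint : nint (y - z) ≤ ((m:ℝ) + 1)/N := by
    rcases min_cases d ((N:ℤ) - d) with ⟨he, _⟩ | ⟨he, _⟩
    · have := nint_near hN0 y z 0
      rw [show k₁ - k₂ - 0*(N:ℤ) = d by ring, abs_of_nonneg (by omega : (0:ℤ) ≤ d)] at this
      rw [hm, he]; exact_mod_cast this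
    · have := nint_near hN0 y z 1
      rw [show k₁ - k₂ - 1*(N:ℤ) = -((N:ℤ) - d) by ring, abs_neg,
        abs_of_nonneg (by omega : (0:ℤ) ≤ (N:ℤ) - d)] at this
      rw [hm, he]; exact_mod_cast this
  -- step 4 : RHS superset
  have hsub : Finset.Icc (m.toNat + 1) (s+1) ⊆
      (Finset.Icc 1 (s+1)).filter (fun t : ℕ => nint (y - z) ≤ (t:ℝ)/N) := by
    intro t ht
    simp only [Finset.mem_Icc] at ht
    simp only [Finset.mem_filter, Finset.mem_Icc]
    refine ⟨⟨by omega, ht.2⟩, ?_⟩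
    refine hnint.trans ?_
    have htt : ((m:ℝ)+1) ≤ (t:ℝ) := by
      have h1 : m.toNat + 1 ≤ t := ht.1
      have h2 : m + 1 ≤ (t:ℤ) := by omega
      exact_mod_cast h2
    gcongr
  have hcard2 : (s + 1) - m.toNat ≤
      (((Finset.Icc 1 (s+1)).filter (fun t : ℕ => nint (y - z) ≤ (t:ℝ)/N)).card) := by
    have := Finset.card_le_card hsub
    rw [Nat.card_Icc] at this
    omega
  rw [hfe]
  omega

lemma nint_neg (w : ℝ) : nint (-w) = nint w := by
  by_cases h : Int.fract w = 0
  · have h' : Int.fract (-w) = 0 := by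
      rw [Int.fract_eq_iff] at h ⊢
      obtain ⟨-, -, z, hz⟩ := h
      exact ⟨le_refl _, one_pos, ⟨-z, by push_cast; linarith [hz]⟩⟩
    rw [nint, nint, abs_sub_round_eq_min, abs_sub_round_eq_min, h, h']
  · rw [nint, nint, abs_sub_round_eq_min, abs_sub_round_eq_min, Int.fract_neg h]
    rw [show 1 - (1 - Int.fract w) = Int.fract w by ring, inf_comm]

lemma pair_card' {N s : ℕ} (hs : 1 ≤ s) (hN : 2*s+2 ≤ N) {y z : ℝ}
    (hy : y ∈ Set.Ico (0:ℝ) 1) (hz : z ∈ Set.Ico (0:ℝ) 1) :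
    (((Finset.range N).filter (fun i : ℕ =>
        Int.fract (y - (i:ℝ)/N) < (s:ℝ)/N ∧ Int.fract (z - (i:ℝ)/N) < (s:ℝ)/N)).card)
    ≤ ((Finset.Icc 1 (s+1)).filter (fun t : ℕ => nint (y - z) ≤ (t:ℝ)/N)).card := by
  rcases le_total (⌊(N:ℝ)*z⌋) (⌊(N:ℝ)*y⌋) with h | h
  · exact pair_card hs hN hy hz h
  · have h1 := pair_card hs hN hz hy h
    have e1 : ((Finset.range N).filter (fun i : ℕ =>
        Int.fract (y - (i:ℝ)/N) < (s:ℝ)/N ∧ Int.fract (z - (i:ℝ)/N) < (s:ℝ)/N))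
        = ((Finset.range N).filter (fun i : ℕ =>
        Int.fract (z - (i:ℝ)/N) < (s:ℝ)/N ∧ Int.fract (y - (i:ℝ)/N) < (s:ℝ)/N)) := by
      apply Finset.filter_congr; intro i _; exact and_comm
    have e2 : ((Finset.Icc 1 (s+1)).filter (fun t : ℕ => nint (y - z) ≤ (t:ℝ)/N))
        = ((Finset.Icc 1 (s+1)).filter (fun t : ℕ => nint (z - y) ≤ (t:ℝ)/N)) := by
      apply Finset.filter_congr; intro t _
      rw [show y - z = -(z - y) by ring, nint_neg]
    rw [e1, e2]
    exact h1

noncomputable def wc (x : ℕ → ℝ) (N s i : ℕ) : ℕ :=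
  ((Finset.Icc 1 N).filter (fun n => Int.fract (x n - (i:ℝ)/N) < (s:ℝ)/N)).card

lemma count_window {N s : ℕ} (hsN : s ≤ N) (hN0 : 0 < N) {y : ℝ}
    (hy : y ∈ Set.Ico (0:ℝ) 1) :
    ((Finset.range N).filter (fun i : ℕ => Int.fract (y - (i:ℝ)/N) < (s:ℝ)/N)).card = s := by
  obtain ⟨hk0, hkN⟩ := floor_mem_bounds hN0 hy
  have he : ((Finset.range N).filter (fun i : ℕ => Int.fract (y - (i:ℝ)/N) < (s:ℝ)/N))
      = ((Finset.range N).filter (wpred N s ⌊(N:ℝ)*y⌋)) := by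
    apply Finset.filter_congr
    intro i hi
    simp only [Finset.mem_range] at hi
    rw [window_iff hsN hy hi]
    simp [wpred]
  rw [he, count_wpred hsN hk0 hkN]

lemma sum_wc (x : ℕ → ℝ) (hx : ∀ n, x n ∈ Set.Ico (0:ℝ) 1) {N s : ℕ}
    (hsN : s ≤ N) (hN0 : 0 < N) :
    ∑ i ∈ Finset.range N, wc x N s i = s * N := by
  simp only [wc, Finset.card_filter]
  rw [Finset.sum_comm]
  have h1 : ∀ n ∈ Finset.Icc 1 N,
      (∑ i ∈ Finset.range N, if Int.fract (x n - (i:ℝ)/N) < (s:ℝ)/N then 1 else 0) = s := by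
    intro n _
    rw [← Finset.card_filter]
    exact count_window hsN hN0 (hx n)
  rw [Finset.sum_congr rfl h1, Finset.sum_const, Nat.card_Icc, smul_eq_mul]
  simp [Nat.add_sub_cancel, mul_comm]

lemma sum_sq_wc (x : ℕ → ℝ) (hx : ∀ n, x n ∈ Set.Ico (0:ℝ) 1) {N s : ℕ}
    (hs : 1 ≤ s) (hN : 2*s+2 ≤ N) :
    ∑ i ∈ Finset.range N, (wc x N s i)^2 ≤ s*N +
      ∑ t ∈ Finset.Icc 1 (s+1),
        ((Finset.Icc 1 N ×ˢ Finset.Icc 1 N).filter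
          (fun p => p.1 ≠ p.2 ∧ nint (x p.1 - x p.2) ≤ (t:ℝ)/N)).card := by
  have hN0 : 0 < N := by omega
  have hsN : s ≤ N := by omega
  -- step 1 : w_i^2 as pair count
  have e1 : ∀ i : ℕ, (wc x N s i)^2 = ((Finset.Icc 1 N ×ˢ Finset.Icc 1 N).filter
      (fun p => Int.fract (x p.1 - (i:ℝ)/N) < (s:ℝ)/N ∧
                Int.fract (x p.2 - (i:ℝ)/N) < (s:ℝ)/N)).card := by
    intro i
    rw [sq, wc, ← Finset.card_product, ← Finset.filter_product]
  simp only [e1]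
  -- step 2 : swap sums
  have e2 : ∑ i ∈ Finset.range N, ((Finset.Icc 1 N ×ˢ Finset.Icc 1 N).filter
      (fun p => Int.fract (x p.1 - (i:ℝ)/N) < (s:ℝ)/N ∧
                Int.fract (x p.2 - (i:ℝ)/N) < (s:ℝ)/N)).card
      = ∑ p ∈ Finset.Icc 1 N ×ˢ Finset.Icc 1 N,
          ((Finset.range N).filter (fun i : ℕ =>
            Int.fract (x p.1 - (i:ℝ)/N) < (s:ℝ)/N ∧
            Int.fract (x p.2 - (i:ℝ)/N) < (s:ℝ)/N)).card := by
    simp only [Finset.card_filter]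
    rw [Finset.sum_comm]
  rw [e2]
  -- step 3 : split diagonal
  rw [← Finset.sum_filter_add_sum_filter_not (Finset.Icc 1 N ×ˢ Finset.Icc 1 N)
    (fun p => p.1 = p.2)]
  have hdiag : ∑ p ∈ (Finset.Icc 1 N ×ˢ Finset.Icc 1 N).filter (fun p => p.1 = p.2),
      ((Finset.range N).filter (fun i : ℕ =>
        Int.fract (x p.1 - (i:ℝ)/N) < (s:ℝ)/N ∧
        Int.fract (x p.2 - (i:ℝ)/N) < (s:ℝ)/N)).card ≤ s * N := by
    have hb : ∀ p ∈ (Finset.Icc 1 N ×ˢ Finset.Icc 1 N).filter (fun p => p.1 = p.2),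
        ((Finset.range N).filter (fun i : ℕ =>
          Int.fract (x p.1 - (i:ℝ)/N) < (s:ℝ)/N ∧
          Int.fract (x p.2 - (i:ℝ)/N) < (s:ℝ)/N)).card ≤ s := by
      intro p _
      calc ((Finset.range N).filter (fun i : ℕ =>
          Int.fract (x p.1 - (i:ℝ)/N) < (s:ℝ)/N ∧
          Int.fract (x p.2 - (i:ℝ)/N) < (s:ℝ)/N)).card
          ≤ ((Finset.range N).filter (fun i : ℕ =>
            Int.fract (x p.1 - (i:ℝ)/N) < (s:ℝ)/N)).card := by
            apply Finset.card_le_card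
            intro i hi
            simp only [Finset.mem_filter] at hi ⊢
            exact ⟨hi.1, hi.2.1⟩
        _ = s := count_window hsN hN0 (hx p.1)
    calc _ ≤ ∑ p ∈ (Finset.Icc 1 N ×ˢ Finset.Icc 1 N).filter (fun p => p.1 = p.2), s :=
          Finset.sum_le_sum hb
      _ = ((Finset.Icc 1 N ×ˢ Finset.Icc 1 N).filter (fun p => p.1 = p.2)).card * s := by
          rw [Finset.sum_const, smul_eq_mul]
      _ ≤ (Finset.Icc 1 N).card * s := by
          gcongr
          refine Finset.card_le_card_of_injOn (fun p => p.1) ?_ ?_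
          · intro p hp
            simp only [Finset.mem_coe, Finset.mem_filter, Finset.mem_product] at hp
            exact hp.1.1
          · intro p hp q hq hpq
            simp only [Finset.coe_filter, Finset.mem_coe, Finset.mem_product, Set.mem_setOf_eq] at hp hq
            simp only [] at hpq
            have h2 := hp.2
            have h3 := hq.2
            exact Prod.ext hpq (by rw [← h2, ← h3, hpq])
      _ = s * N := by rw [Nat.card_Icc]; simp [Nat.add_sub_cancel, mul_comm]
  have hoff : ∑ p ∈ (Finset.Icc 1 N ×ˢ Finset.Icc 1 N).filter (fun p => ¬ p.1 = p.2),
      ((Finset.range N).filter (fun i : ℕ =>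
        Int.fract (x p.1 - (i:ℝ)/N) < (s:ℝ)/N ∧
        Int.fract (x p.2 - (i:ℝ)/N) < (s:ℝ)/N)).card
      ≤ ∑ t ∈ Finset.Icc 1 (s+1),
        ((Finset.Icc 1 N ×ˢ Finset.Icc 1 N).filter
          (fun p => p.1 ≠ p.2 ∧ nint (x p.1 - x p.2) ≤ (t:ℝ)/N)).card := by
    calc ∑ p ∈ (Finset.Icc 1 N ×ˢ Finset.Icc 1 N).filter (fun p => ¬ p.1 = p.2),
        ((Finset.range N).filter (fun i : ℕ =>
          Int.fract (x p.1 - (i:ℝ)/N) < (s:ℝ)/N ∧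
          Int.fract (x p.2 - (i:ℝ)/N) < (s:ℝ)/N)).card
        ≤ ∑ p ∈ (Finset.Icc 1 N ×ˢ Finset.Icc 1 N).filter (fun p => ¬ p.1 = p.2),
          ((Finset.Icc 1 (s+1)).filter (fun t : ℕ => nint (x p.1 - x p.2) ≤ (t:ℝ)/N)).card := by
          apply Finset.sum_le_sum
          intro p _
          exact pair_card' hs hN (hx p.1) (hx p.2)
      _ = ∑ t ∈ Finset.Icc 1 (s+1),
          (((Finset.Icc 1 N ×ˢ Finset.Icc 1 N).filter (fun p => ¬ p.1 = p.2)).filter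
            (fun p => nint (x p.1 - x p.2) ≤ (t:ℝ)/N)).card := by
          simp only [Finset.card_filter]
          rw [Finset.sum_comm]
      _ = ∑ t ∈ Finset.Icc 1 (s+1),
          ((Finset.Icc 1 N ×ˢ Finset.Icc 1 N).filter
            (fun p => p.1 ≠ p.2 ∧ nint (x p.1 - x p.2) ≤ (t:ℝ)/N)).card := by
          apply Finset.sum_congr rfl
          intro t _
          rw [Finset.filter_filter]
  omega

lemma interval_lower (x : ℕ → ℝ) (hx : ∀ n, x n ∈ Set.Ico (0:ℝ) 1) {N s : ℕ}
    (hs : 1 ≤ s) (hsN : s ≤ N) {c d : ℝ} (hc : 0 ≤ c) (hcd : c ≤ d) (hd : d ≤ 1) :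
    (s:ℝ) * ((d - c)*N - (s+2)) - (∑ i ∈ Finset.range N, |(wc x N s i : ℝ) - s|)
      ≤ s * ((Finset.Icc 1 N).filter (fun n => c ≤ x n ∧ x n < d)).card := by
  have hN0 : 0 < N := by omega
  have hNR : (0:ℝ) < N := by exact_mod_cast hN0
  set I := (Finset.range N).filter (fun i : ℕ => c ≤ (i:ℝ)/N ∧ ((i:ℝ)+s)/N ≤ d) with hI
  -- (i)  ∑_{i∈I} wc ≤ s * D
  have hI_le : ∑ i ∈ I, wc x N s i
      ≤ s * ((Finset.Icc 1 N).filter (fun n => c ≤ x n ∧ x n < d)).card := by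
    simp only [wc, Finset.card_filter]
    rw [Finset.sum_comm, ← Finset.card_filter]
    have hb : ∀ n ∈ Finset.Icc 1 N,
        (∑ i ∈ I, if Int.fract (x n - (i:ℝ)/N) < (s:ℝ)/N then 1 else 0)
          ≤ (if c ≤ x n ∧ x n < d then s else 0) := by
      intro n _
      by_cases hcd' : c ≤ x n ∧ x n < d
      · rw [if_pos hcd', ← Finset.card_filter]
        calc (I.filter (fun i : ℕ => Int.fract (x n - (i:ℝ)/N) < (s:ℝ)/N)).card
            ≤ ((Finset.range N).filter
                (fun i : ℕ => Int.fract (x n - (i:ℝ)/N) < (s:ℝ)/N)).card := by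
              apply Finset.card_le_card
              intro i hi
              simp only [hI, Finset.mem_filter, Finset.mem_range] at hi ⊢
              exact ⟨hi.1.1, hi.2⟩
          _ = s := count_window hsN hN0 (hx n)
      · rw [if_neg hcd']
        have hzero : ∀ i ∈ I, (if Int.fract (x n - (i:ℝ)/N) < (s:ℝ)/N then 1 else 0) = 0 := by
          intro i hi
          simp only [hI, Finset.mem_filter, Finset.mem_range] at hi
          obtain ⟨hiN, hci, hid⟩ := hi
          rw [if_neg]
          intro hcond
          have hisN : (i:ℝ) + s ≤ N := by
            have := hid.trans hd
            rw [div_le_one hNR] at this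
            exact this
          apply hcd'
          rcases le_or_gt ((i:ℝ)/N) (x n) with hge | hlt
          · have hfr : Int.fract (x n - (i:ℝ)/N) = x n - (i:ℝ)/N := by
              apply Int.fract_eq_self.mpr
              constructor
              · linarith
              · have : (0:ℝ) ≤ (i:ℝ)/N := by positivity
                linarith [(hx n).2]
            rw [hfr] at hcond
            constructor
            · linarith
            · have h5 : x n < (i:ℝ)/N + (s:ℝ)/N := by linarith
              rw [add_div] at hid
              linarith
          · exfalso
            have hfr : Int.fract (x n - (i:ℝ)/N) = x n - (i:ℝ)/N + 1 := by
              rw [← Int.fract_add_one (x n - (i:ℝ)/N)]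
              apply Int.fract_eq_self.mpr
              constructor
              · have hi1 : (i:ℝ)/N ≤ 1 := by
                  rw [div_le_one hNR]; linarith [(by exact_mod_cast hs : (1:ℝ) ≤ s)]
                linarith [(hx n).1]
              · linarith
            rw [hfr] at hcond
            have h6 : x n < ((i:ℝ) + s - N)/N := by
              rw [sub_div, add_div]
              have hNN : (N:ℝ)/N = 1 := div_self hNR.ne'
              linarith
            have h2 : ((i:ℝ) + s - N)/N ≤ 0 := by
              apply div_nonpos_of_nonpos_of_nonneg
              · linarith
              · exact hNR.le
            linarith [(hx n).1, h6]
        calc (∑ i ∈ I, if Int.fract (x n - (i:ℝ)/N) < (s:ℝ)/N then 1 else 0)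
            = ∑ i ∈ I, 0 := Finset.sum_congr rfl hzero
          _ = 0 := Finset.sum_const_zero
          _ ≤ 0 := le_refl _
    calc ∑ n ∈ Finset.Icc 1 N, (∑ i ∈ I, if Int.fract (x n - (i:ℝ)/N) < (s:ℝ)/N then 1 else 0)
        ≤ ∑ n ∈ Finset.Icc 1 N, (if c ≤ x n ∧ x n < d then s else 0) :=
          Finset.sum_le_sum hb
      _ = s * ((Finset.Icc 1 N).filter (fun n => c ≤ x n ∧ x n < d)).card := by
          rw [Finset.sum_ite, Finset.sum_const_zero, add_zero, Finset.sum_const,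
            smul_eq_mul, mul_comm]
  -- (iii) size of I
  have hJ : (d - c)*N - ((s:ℝ)+2) ≤ (I.card : ℝ) := by
    set J := Finset.Ico (⌈(N:ℝ)*c⌉₊) (⌊(N:ℝ)*d⌋₊ + 1 - s) with hJdef
    have hfloorN : ⌊(N:ℝ)*d⌋₊ ≤ N := by
      calc ⌊(N:ℝ)*d⌋₊ ≤ ⌊(N:ℝ)⌋₊ := Nat.floor_mono (by nlinarith)
        _ = N := Nat.floor_natCast N
    have hJI : J ⊆ I := by
      intro i hi
      simp only [hJdef, Finset.mem_Ico] at hi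
      have his : i + s ≤ ⌊(N:ℝ)*d⌋₊ := by omega
      have hisR : (i:ℝ) + s ≤ (N:ℝ)*d := by
        calc (i:ℝ) + s = ((i + s : ℕ) : ℝ) := by push_cast; ring
          _ ≤ (⌊(N:ℝ)*d⌋₊ : ℝ) := by exact_mod_cast his
          _ ≤ (N:ℝ)*d := Nat.floor_le (by nlinarith)
      have hciR : (N:ℝ)*c ≤ i := Nat.ceil_le.mp hi.1
      simp only [hI, Finset.mem_filter, Finset.mem_range]
      refine ⟨by omega, ?_, ?_⟩
      · rw [le_div_iff₀ hNR]; linarith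
      · rw [div_le_iff₀ hNR]; linarith
    have hcl : (⌈(N:ℝ)*c⌉₊ : ℝ) < (N:ℝ)*c + 1 := Nat.ceil_lt_add_one (by positivity)
    have hfl : (N:ℝ)*d < (⌊(N:ℝ)*d⌋₊ : ℝ) + 1 := Nat.lt_floor_add_one _
    have hmono : (J.card : ℝ) ≤ I.card := by exact_mod_cast Finset.card_le_card hJI
    rcases le_or_gt (⌈(N:ℝ)*c⌉₊ + s) (⌊(N:ℝ)*d⌋₊ + 1) with h | h
    · have hc2 : J.card + s + ⌈(N:ℝ)*c⌉₊ = ⌊(N:ℝ)*d⌋₊ + 1 := by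
        rw [hJdef, Nat.card_Ico]; omega
      have hc2R : (J.card:ℝ) + s + (⌈(N:ℝ)*c⌉₊:ℝ) = (⌊(N:ℝ)*d⌋₊:ℝ) + 1 := by
        exact_mod_cast hc2
      linarith
    · have hc0 : (0:ℝ) ≤ J.card := by positivity
      have hR : ((⌊(N:ℝ)*d⌋₊:ℝ)) + 1 ≤ (⌈(N:ℝ)*c⌉₊:ℝ) + s := by
        exact_mod_cast h.le
      linarith
  -- (ii)
  have habs : (s:ℝ) * I.card ≤ (∑ i ∈ I, (wc x N s i : ℝ))
      + ∑ i ∈ Finset.range N, |(wc x N s i : ℝ) - s| := by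
    have h1 : ∀ i ∈ I, (s:ℝ) ≤ (wc x N s i : ℝ) + |(wc x N s i : ℝ) - s| := by
      intro i _
      have := le_abs_self ((s:ℝ) - wc x N s i)
      rw [abs_sub_comm] at this
      linarith
    calc (s:ℝ) * I.card = ∑ _i ∈ I, (s:ℝ) := by
          rw [Finset.sum_const, nsmul_eq_mul, mul_comm]
      _ ≤ ∑ i ∈ I, ((wc x N s i : ℝ) + |(wc x N s i : ℝ) - s|) := Finset.sum_le_sum h1
      _ = (∑ i ∈ I, (wc x N s i : ℝ)) + ∑ i ∈ I, |(wc x N s i : ℝ) - s| :=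
          Finset.sum_add_distrib
      _ ≤ (∑ i ∈ I, (wc x N s i : ℝ))
          + ∑ i ∈ Finset.range N, |(wc x N s i : ℝ) - s| := by
          gcongr
          exact Finset.filter_subset _ _
  have hI_leR : (∑ i ∈ I, (wc x N s i : ℝ))
      ≤ (s:ℝ) * ((Finset.Icc 1 N).filter (fun n => c ≤ x n ∧ x n < d)).card := by
    have := hI_le
    push_cast
    exact_mod_cast this
  have hs0 : (0:ℝ) ≤ s := by positivity
  nlinarith [mul_le_mul_of_nonneg_left hJ hs0]

lemma gauss_real (m : ℕ) : ∑ t ∈ Finset.Icc 1 m, (t:ℝ) = m*(m+1)/2 := by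
  induction m with
  | zero => simp
  | succ n ih =>
    rw [Finset.sum_Icc_succ_top (by omega), ih]
    push_cast; ring

lemma card_partition (x : ℕ → ℝ) (hx : ∀ n, x n ∈ Set.Ico (0:ℝ) 1) (N : ℕ)
    {a b : ℝ} (ha : 0 ≤ a) (hab : a ≤ b) (hb : b ≤ 1) :
    ((Finset.Icc 1 N).filter (fun n => 0 ≤ x n ∧ x n < a)).card
    + ((Finset.Icc 1 N).filter (fun n => a ≤ x n ∧ x n < b)).card
    + ((Finset.Icc 1 N).filter (fun n => b ≤ x n ∧ x n < 1)).card = N := by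
  simp only [Finset.card_filter]
  rw [← Finset.sum_add_distrib, ← Finset.sum_add_distrib]
  have h1 : ∀ n ∈ Finset.Icc 1 N,
      ((if 0 ≤ x n ∧ x n < a then 1 else 0) + (if a ≤ x n ∧ x n < b then 1 else 0)
        + (if b ≤ x n ∧ x n < 1 then 1 else 0)) = 1 := by
    intro n _
    obtain ⟨hx0, hx1⟩ := hx n
    rcases lt_or_ge (x n) a with hA | hA
    · rw [if_pos ⟨hx0, hA⟩, if_neg (fun h => absurd h.1 (by linarith)),
        if_neg (fun h => absurd h.1 (by linarith))]
    · rcases lt_or_ge (x n) b with hB | hB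
      · rw [if_neg (fun h => absurd h.2 (by linarith)), if_pos ⟨hA, hB⟩,
          if_neg (fun h => absurd h.1 (by linarith))]
      · rw [if_neg (fun h => absurd h.2 (by linarith)), if_neg (fun h => absurd h.2 (by linarith)),
          if_pos ⟨hB, hx1⟩]
  rw [Finset.sum_congr rfl h1, Finset.sum_const, Nat.card_Icc, smul_eq_mul]
  omega

end AuxPPC

/-- (Aistleitner–Lachmann–Pausinger, Grepstad–Larcher)
If a sequence in [0,1) has Poissonian pair correlation (for every s > 0),
then it is uniformly distributed in [0,1). -/
theorem stmt5 (x : ℕ → ℝ) (hx : ∀ n, x n ∈ Set.Ico (0 : ℝ) 1)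
    (hppc : ∀ s : ℝ, 0 < s →
      Tendsto (fun N : ℕ =>
        (((Finset.Icc 1 N ×ˢ Finset.Icc 1 N).filter
          (fun p => p.1 ≠ p.2 ∧ nint (x p.1 - x p.2) ≤ s / N)).card : ℝ) / N)
        atTop (nhds (2 * s)))
    (a b : ℝ) (ha : 0 ≤ a) (hab : a < b) (hb : b ≤ 1) :
    Tendsto (fun N : ℕ =>
      (((Finset.Icc 1 N).filter (fun n => a ≤ x n ∧ x n < b)).card : ℝ) / N)
      atTop (nhds (b - a)) := by
  rw [Metric.tendsto_atTop]
  intro ε hε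
  -- choice of s
  set s : ℕ := max 1 ⌈(256:ℝ)/ε^2⌉₊ with hsdef
  have hs1 : 1 ≤ s := le_max_left _ _
  have hs1R : (1:ℝ) ≤ s := by exact_mod_cast hs1
  have hsR : (256:ℝ)/ε^2 ≤ s := by
    calc (256:ℝ)/ε^2 ≤ (⌈(256:ℝ)/ε^2⌉₊ : ℝ) := Nat.le_ceil _
      _ ≤ s := by exact_mod_cast le_max_right _ _
  have hsqrt : 2*Real.sqrt (4*(s:ℝ)+4) ≤ ε*s/2 := by
    have h16 : 16/ε ≤ Real.sqrt s := by
      rw [show (16:ℝ)/ε = Real.sqrt ((16/ε)^2) from (Real.sqrt_sq (by positivity)).symm]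
      apply Real.sqrt_le_sqrt
      rw [div_pow]
      convert hsR using 2
      norm_num
    have hsq : Real.sqrt (s:ℝ) ^ 2 = s := Real.sq_sqrt (by positivity)
    have h9 : Real.sqrt (4*(s:ℝ)+4) ≤ 3 * Real.sqrt s := by
      rw [show (3:ℝ) * Real.sqrt s = Real.sqrt (9*s) by
        rw [show (9:ℝ)*(s:ℝ) = (3*Real.sqrt s)^2 by rw [mul_pow, hsq]; ring,
          Real.sqrt_sq (by positivity)]]
      apply Real.sqrt_le_sqrt
      linarith
    have hεs : 16 ≤ ε * Real.sqrt s := by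
      rw [div_le_iff₀ hε] at h16
      linarith [h16]
    nlinarith [Real.sqrt_nonneg (s:ℝ), hε.le]
  -- eventual bound on pair-correlation sums
  have hPP : ∀ᶠ N : ℕ in atTop, ∀ t ∈ Finset.Icc 1 (s+1),
      (((Finset.Icc 1 N ×ˢ Finset.Icc 1 N).filter
        (fun p => p.1 ≠ p.2 ∧ nint (x p.1 - x p.2) ≤ (t:ℝ)/N)).card : ℝ)/N
        ≤ 2*t + 1/((s:ℝ)+1) := by
    rw [Filter.eventually_all_finset]
    intro t ht
    simp only [Finset.mem_Icc] at ht
    have ht0 : (0:ℝ) < t := by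
      have h : 0 < t := ht.1
      exact_mod_cast h
    exact (hppc (t:ℝ) ht0).eventually
      (eventually_le_nhds (lt_add_of_pos_right _ (by positivity)))
  obtain ⟨N₁, hN₁⟩ := Filter.eventually_atTop.mp hPP
  refine ⟨max N₁ (max (2*s+2) (⌈4*((s:ℝ)+2)/ε⌉₊ + 1)), fun N hN => ?_⟩
  have hNN₁ : N₁ ≤ N := le_trans (le_max_left _ _) hN
  have hN2s : 2*s+2 ≤ N := le_trans (le_trans (le_max_left _ _) (le_max_right _ _)) hN
  have hNε' : (⌈4*((s:ℝ)+2)/ε⌉₊ + 1 : ℕ) ≤ N :=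
    le_trans (le_trans (le_max_right _ _) (le_max_right _ _)) hN
  have hN0 : 0 < N := by omega
  have hNR : (0:ℝ) < N := by exact_mod_cast hN0
  have hsN : s ≤ N := by omega
  have hNεR : 4*((s:ℝ)+2)/ε < N := by
    calc 4*((s:ℝ)+2)/ε ≤ (⌈4*((s:ℝ)+2)/ε⌉₊ : ℝ) := Nat.le_ceil _
      _ < (⌈4*((s:ℝ)+2)/ε⌉₊ : ℝ) + 1 := by linarith
      _ ≤ N := by exact_mod_cast hNε'
  -- pair correlation sum bound at this N
  have hPsum : ∑ t ∈ Finset.Icc 1 (s+1),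
      (((Finset.Icc 1 N ×ˢ Finset.Icc 1 N).filter
        (fun p => p.1 ≠ p.2 ∧ nint (x p.1 - x p.2) ≤ (t:ℝ)/N)).card : ℝ)
      ≤ (((s:ℝ)+1)*((s:ℝ)+2)+1)*N := by
    have h1 : ∑ t ∈ Finset.Icc 1 (s+1),
        (((Finset.Icc 1 N ×ˢ Finset.Icc 1 N).filter
          (fun p => p.1 ≠ p.2 ∧ nint (x p.1 - x p.2) ≤ (t:ℝ)/N)).card : ℝ)/N
        ≤ ∑ t ∈ Finset.Icc 1 (s+1), (2*(t:ℝ) + 1/((s:ℝ)+1)) :=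
      Finset.sum_le_sum (hN₁ N hNN₁)
    have h2 : ∑ t ∈ Finset.Icc 1 (s+1), (2*(t:ℝ) + 1/((s:ℝ)+1))
        = ((s:ℝ)+1)*((s:ℝ)+2)+1 := by
      rw [Finset.sum_add_distrib, ← Finset.mul_sum, gauss_real, Finset.sum_const,
        Nat.card_Icc, nsmul_eq_mul]
      push_cast [Nat.add_sub_cancel]
      have hne : (s:ℝ)+1 ≠ 0 := by positivity
      have e : ((s:ℝ)+1)*(1/((s:ℝ)+1)) = 1 := by
        rw [mul_one_div, div_self hne]
      rw [e]; ring
    have h3 : ∑ t ∈ Finset.Icc 1 (s+1),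
        (((Finset.Icc 1 N ×ˢ Finset.Icc 1 N).filter
          (fun p => p.1 ≠ p.2 ∧ nint (x p.1 - x p.2) ≤ (t:ℝ)/N)).card : ℝ)
        = (∑ t ∈ Finset.Icc 1 (s+1),
          (((Finset.Icc 1 N ×ˢ Finset.Icc 1 N).filter
            (fun p => p.1 ≠ p.2 ∧ nint (x p.1 - x p.2) ≤ (t:ℝ)/N)).card : ℝ)/N) * N := by
      rw [← Finset.sum_div]
      rw [div_mul_cancel₀ _ hNR.ne']
    rw [h3]
    calc _ ≤ (((s:ℝ)+1)*((s:ℝ)+2)+1) * N :=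
        mul_le_mul_of_nonneg_right (h1.trans h2.le) hNR.le
      _ = _ := rfl
  -- variance bound
  set W : ℕ → ℝ := fun i => (wc x N s i : ℝ) with hW
  have hsum : ∑ i ∈ Finset.range N, W i = (s:ℝ)*N := by
    rw [hW]
    have := sum_wc x hx hsN hN0
    calc ∑ i ∈ Finset.range N, (wc x N s i:ℝ) = ((∑ i ∈ Finset.range N, wc x N s i : ℕ):ℝ) := by
          push_cast; rfl
      _ = (s:ℝ)*N := by rw [this]; push_cast; ring
  have hsq : ∑ i ∈ Finset.range N, (W i)^2 ≤ (s:ℝ)*N + (((s:ℝ)+1)*((s:ℝ)+2)+1)*N := by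
    have h1 := sum_sq_wc x hx hs1 hN2s
    have h2 : ∑ i ∈ Finset.range N, (W i)^2
        = ((∑ i ∈ Finset.range N, (wc x N s i)^2 : ℕ) : ℝ) := by push_cast; rfl
    rw [h2]
    calc ((∑ i ∈ Finset.range N, (wc x N s i)^2 : ℕ) : ℝ)
        ≤ ((s*N + ∑ t ∈ Finset.Icc 1 (s+1),
            ((Finset.Icc 1 N ×ˢ Finset.Icc 1 N).filter
              (fun p => p.1 ≠ p.2 ∧ nint (x p.1 - x p.2) ≤ (t:ℝ)/N)).card : ℕ) : ℝ) := by
          exact_mod_cast h1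
      _ = (s:ℝ)*N + ∑ t ∈ Finset.Icc 1 (s+1),
            (((Finset.Icc 1 N ×ˢ Finset.Icc 1 N).filter
              (fun p => p.1 ≠ p.2 ∧ nint (x p.1 - x p.2) ≤ (t:ℝ)/N)).card : ℝ) := by
          push_cast; ring
      _ ≤ (s:ℝ)*N + (((s:ℝ)+1)*((s:ℝ)+2)+1)*N := by linarith [hPsum]
  have hvar : ∑ i ∈ Finset.range N, (W i - s)^2 ≤ (4*(s:ℝ)+4)*N := by
    have e : ∀ i ∈ Finset.range N, (W i - s)^2 = (W i)^2 - 2*s*(W i) + (s:ℝ)^2 :=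
      fun i _ => by ring
    rw [Finset.sum_congr rfl e]
    rw [Finset.sum_add_distrib, Finset.sum_sub_distrib, ← Finset.mul_sum, Finset.sum_const,
      Finset.card_range, nsmul_eq_mul, hsum]
    nlinarith [hsq, hs1R, hNR]
  set S : ℝ := ∑ i ∈ Finset.range N, |W i - s| with hSdef
  have hS0 : 0 ≤ S := Finset.sum_nonneg fun i _ => abs_nonneg _
  have hS : S ≤ N * Real.sqrt (4*(s:ℝ)+4) := by
    have hcs := Finset.sum_mul_sq_le_sq_mul_sq (Finset.range N)
      (fun _ => (1:ℝ)) (fun i => |W i - s|)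
    simp only [one_pow, one_mul, sq_abs, Finset.sum_const, Finset.card_range,
      nsmul_eq_mul, mul_one] at hcs
    have h2 : S^2 ≤ (N * Real.sqrt (4*(s:ℝ)+4))^2 := by
      rw [mul_pow, Real.sq_sqrt (by positivity)]
      calc S^2 ≤ (N:ℝ) * ∑ i ∈ Finset.range N, (W i - s)^2 := hcs
        _ ≤ (N:ℝ) * ((4*(s:ℝ)+4)*N) := by
            apply mul_le_mul_of_nonneg_left hvar hNR.le
        _ = (N:ℝ)^2 * (4*(s:ℝ)+4) := by ring
    calc S = Real.sqrt (S^2) := (Real.sqrt_sq hS0).symm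
      _ ≤ Real.sqrt ((N * Real.sqrt (4*(s:ℝ)+4))^2) := Real.sqrt_le_sqrt h2
      _ = N * Real.sqrt (4*(s:ℝ)+4) := Real.sqrt_sq (by positivity)
  -- interval bounds
  set D1 : ℝ := (((Finset.Icc 1 N).filter (fun n => 0 ≤ x n ∧ x n < a)).card : ℝ) with hD1
  set D2 : ℝ := (((Finset.Icc 1 N).filter (fun n => a ≤ x n ∧ x n < b)).card : ℝ) with hD2
  set D3 : ℝ := (((Finset.Icc 1 N).filter (fun n => b ≤ x n ∧ x n < 1)).card : ℝ) with hD3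
  have hpart : D1 + D2 + D3 = (N:ℝ) := by
    rw [hD1, hD2, hD3]
    exact_mod_cast card_partition x hx N ha hab.le hb
  have hlow2 : (s:ℝ) * ((b - a)*N - ((s:ℝ)+2)) - S ≤ s * D2 :=
    interval_lower x hx hs1 hsN ha hab.le hb
  have hlow1 : (s:ℝ) * ((a - 0)*N - ((s:ℝ)+2)) - S ≤ s * D1 :=
    interval_lower x hx hs1 hsN (le_refl 0) ha (hab.le.trans hb)
  have hlow3 : (s:ℝ) * ((1 - b)*N - ((s:ℝ)+2)) - S ≤ s * D3 :=
    interval_lower x hx hs1 hsN (ha.trans hab.le) hb (le_refl 1)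
  -- conclude
  have hkey : |(s:ℝ)*D2 - (s:ℝ)*(b-a)*N| < ε*((s:ℝ)*N) := by
    have hb1 : 2*S ≤ (N:ℝ)*(ε*s/2) := by
      calc 2*S ≤ 2*((N:ℝ) * Real.sqrt (4*(s:ℝ)+4)) := by linarith
        _ = (N:ℝ)*(2*Real.sqrt (4*(s:ℝ)+4)) := by ring
        _ ≤ (N:ℝ)*(ε*s/2) := by
            apply mul_le_mul_of_nonneg_left hsqrt hNR.le
    have hb2 : 2*(s:ℝ)*((s:ℝ)+2) < ε*(s:ℝ)*N/2 := by
      have h4 : 4*((s:ℝ)+2) < ε*N := by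
        rw [div_lt_iff₀ hε] at hNεR
        linarith
      have h5 := mul_lt_mul_of_pos_left h4 (show (0:ℝ) < (s:ℝ) by positivity)
      linarith only [h5]
    have hss : (0:ℝ) ≤ (s:ℝ)*((s:ℝ)+2) := by positivity
    rw [abs_lt]
    constructor
    · linarith only [hlow2, hb1, hb2, hS0, hss]
    · have hD2eq : (s:ℝ)*D2 = (s:ℝ)*N - s*D1 - s*D3 := by
        rw [← hpart]; ring
      linarith only [hlow1, hlow3, hb1, hb2, hD2eq]
  rw [Real.dist_eq]
  have hsne : ((s:ℝ)) ≠ 0 := by positivity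
  have hNne : ((N:ℝ)) ≠ 0 := hNR.ne'
  have heq : D2/N - (b-a) = ((s:ℝ)*D2 - (s:ℝ)*(b-a)*N)/((s:ℝ)*N) := by
    field_simp
  rw [heq, abs_div, abs_of_pos (by positivity : (0:ℝ) < (s:ℝ)*N), div_lt_iff₀ (by positivity)]
  exact hkey
end

section
/- Let (X_n)_{n≥1} be a sequence of independent random variables, each uniformly distributed on [0,1]. Then almost surely, the sequence (X_n) has Poissonian pair correlation: for every s > 0, lim_{N→∞} (1/N)·#{(m,n) : 1 ≤ m ≠ n ≤ N, ‖X_m − X_n‖ ≤ s/N} = 2s, where ‖·‖ denotes the distance to the nearest integer. -/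
open Filter MeasureTheory Set ProbabilityTheory Topology

lemma nint_eq_norm (x : ℝ) : nint x = ‖(x : UnitAddCircle)‖ := UnitAddCircle.norm_eq.symm
lemma continuous_nint : Continuous nint := by
  simp only [funext nint_eq_norm]
  exact continuous_norm.comp (AddCircle.continuous_mk' 1)
lemma nint_sub_comm (x y : ℝ) : nint (x - y) = nint (y - x) := by
  rw [nint_eq_norm, nint_eq_norm, ← norm_neg, ← AddCircle.coe_neg, neg_sub]
noncomputable def unif : Measure ℝ := volume.restrict (Set.Icc (0:ℝ) 1)
instance : IsProbabilityMeasure unif := by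
  constructor; rw [unif, Measure.restrict_apply_univ, Real.volume_Icc]; norm_num
lemma unif_slice {t : ℝ} (ht : t ≤ 1/2) (x : ℝ) :
    unif {y | nint (x - y) ≤ t} = ENNReal.ofReal (2*t) := by
  have hset : {y : ℝ | nint (x - y) ≤ t}
      = (fun y : ℝ => (y : UnitAddCircle)) ⁻¹' (Metric.closedBall (x : UnitAddCircle) t) := by
    ext y
    simp only [mem_setOf_eq, mem_preimage, Metric.mem_closedBall, dist_eq_norm, nint_eq_norm]
    rw [← norm_neg, ← AddCircle.coe_neg, neg_sub, AddCircle.coe_sub]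
  have hcirc : unif = volume.restrict (Ioc (0:ℝ) (0+1)) := by
    rw [zero_add, unif]
    exact (Measure.restrict_congr_set Ioc_ae_eq_Icc).symm
  rw [hset, hcirc,
    (UnitAddCircle.measurePreserving_mk 0).measure_preimage
      Metric.isClosed_closedBall.measurableSet.nullMeasurableSet,
    AddCircle.volume_closedBall]
  congr 1
  rw [min_eq_right]
  linarith

section Indep
variable {Ω : Type*} [MeasurableSpace Ω] {μ : Measure Ω} [IsProbabilityMeasure μ]
    {X : ℕ → Ω → ℝ} (hmeas : ∀ n, Measurable (X n))
    (hindep : ProbabilityTheory.iIndepFun X μ)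
    (hunif : ∀ n, Measure.map (X n) μ = unif)

/-- the event set -/
def Ev (X : ℕ → Ω → ℝ) (t : ℝ) (p : ℕ × ℕ) : Set Ω := {ω | nint (X p.1 ω - X p.2 ω) ≤ t}

lemma Ev_swap (t : ℝ) (p : ℕ × ℕ) : Ev X t p.swap = Ev X t p := by
  ext ω; simp only [Ev, Prod.fst_swap, Prod.snd_swap, mem_setOf_eq, nint_sub_comm]

lemma measurableSet_S (t : ℝ) : MeasurableSet {p : ℝ × ℝ | nint (p.1 - p.2) ≤ t} :=
  measurableSet_le ((continuous_nint.comp (continuous_fst.sub continuous_snd)).measurable)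
    measurable_const

include hmeas in
lemma measurableSet_Ev (t : ℝ) (p : ℕ × ℕ) : MeasurableSet (Ev X t p) :=
  ((continuous_nint.measurable).comp ((hmeas p.1).sub (hmeas p.2))) measurableSet_Iic

lemma Ev_eq_preimage (t : ℝ) (p : ℕ × ℕ) :
    Ev X t p = (fun ω => (X p.1 ω, X p.2 ω)) ⁻¹' {q : ℝ × ℝ | nint (q.1 - q.2) ≤ t} := rfl

include hmeas hindep hunif in
lemma map_pair {m n : ℕ} (hmn : m ≠ n) :
    μ.map (fun ω => (X m ω, X n ω)) = unif.prod unif := by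
  rw [(indepFun_iff_map_prod_eq_prod_map_map (hmeas m).aemeasurable
      (hmeas n).aemeasurable).mp (hindep.indepFun hmn), hunif, hunif]

include hmeas hindep hunif in
lemma prob_pair {m n : ℕ} (hmn : m ≠ n) {t : ℝ} (ht : t ≤ 1/2) :
    μ (Ev X t (m, n)) = ENNReal.ofReal (2*t) := by
  rw [Ev_eq_preimage,
    ← Measure.map_apply ((hmeas m).prodMk (hmeas n)) (measurableSet_S t),
    map_pair hmeas hindep hunif hmn,
    Measure.prod_apply (measurableSet_S t)]
  have : ∀ x : ℝ, unif (Prod.mk x ⁻¹' {q : ℝ × ℝ | nint (q.1 - q.2) ≤ t})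
      = ENNReal.ofReal (2*t) := fun x => unif_slice ht x
  simp only [this, lintegral_const, measure_univ, mul_one]

include hmeas hindep hunif in
lemma prob_triple {a b c : ℕ} (hab : a ≠ b) (hac : a ≠ c) (hbc : b ≠ c)
    {t : ℝ} (ht : t ≤ 1/2) :
    μ (Ev X t (a, b) ∩ Ev X t (a, c)) = ENNReal.ofReal (2*t) * ENNReal.ofReal (2*t) := by
  have hT : Measurable (fun ω => (X a ω, (X b ω, X c ω))) :=
    (hmeas a).prodMk ((hmeas b).prodMk (hmeas c))
  have hS3 : MeasurableSet {p : ℝ × ℝ × ℝ | nint (p.1 - p.2.1) ≤ t ∧ nint (p.1 - p.2.2) ≤ t} := by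
    apply MeasurableSet.inter
    · exact measurableSet_le ((continuous_nint.comp
        (continuous_fst.sub (continuous_fst.comp continuous_snd))).measurable) measurable_const
    · exact measurableSet_le ((continuous_nint.comp
        (continuous_fst.sub (continuous_snd.comp continuous_snd))).measurable) measurable_const
  have hmap : μ.map (fun ω => (X a ω, (X b ω, X c ω))) = unif.prod (unif.prod unif) := by
    rw [(indepFun_iff_map_prod_eq_prod_map_map (hmeas a).aemeasurable
        ((hmeas b).prodMk (hmeas c)).aemeasurable).mp
        ((hindep.indepFun_prodMk hmeas b c a hab.symm hac.symm).symm),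
      hunif, map_pair hmeas hindep hunif hbc]
  have hpre : Ev X t (a, b) ∩ Ev X t (a, c) = (fun ω => (X a ω, (X b ω, X c ω))) ⁻¹'
      {p : ℝ × ℝ × ℝ | nint (p.1 - p.2.1) ≤ t ∧ nint (p.1 - p.2.2) ≤ t} := rfl
  rw [hpre, ← Measure.map_apply hT hS3, hmap, Measure.prod_apply hS3]
  have hx : ∀ x : ℝ, (unif.prod unif) (Prod.mk x ⁻¹'
      {p : ℝ × ℝ × ℝ | nint (p.1 - p.2.1) ≤ t ∧ nint (p.1 - p.2.2) ≤ t})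
      = ENNReal.ofReal (2*t) * ENNReal.ofReal (2*t) := by
    intro x
    have : Prod.mk x ⁻¹' {p : ℝ × ℝ × ℝ | nint (p.1 - p.2.1) ≤ t ∧ nint (p.1 - p.2.2) ≤ t}
        = {y : ℝ | nint (x - y) ≤ t} ×ˢ {z : ℝ | nint (x - z) ≤ t} := by
      ext ⟨y, z⟩; simp [Set.mem_prod]
    rw [this, Measure.prod_prod, unif_slice ht]
  simp only [hx, lintegral_const, measure_univ, mul_one]

include hmeas hindep hunif in
lemma prob_disjoint {a b c d : ℕ} (hac : a ≠ c) (had : a ≠ d) (hbc : b ≠ c) (hbd : b ≠ d)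
    {t : ℝ} (ht : t ≤ 1/2) :
    μ (Ev X t (a, b) ∩ Ev X t (c, d)) = μ (Ev X t (a, b)) * μ (Ev X t (c, d)) := by
  rw [Ev_eq_preimage, Ev_eq_preimage]
  exact (hindep.indepFun_prodMk_prodMk hmeas a b c d hac had hbc hbd).measure_inter_preimage_eq_mul
    _ _ (measurableSet_S t) (measurableSet_S t)

include hmeas hindep hunif in
lemma prob_inter_le {p q : ℕ × ℕ} (hp : p.1 ≠ p.2) (hq : q.1 ≠ q.2)
    (hqp : q ≠ p) (hqp' : q ≠ p.swap) {t : ℝ} (ht : t ≤ 1/2) :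
    μ (Ev X t p ∩ Ev X t q) ≤ ENNReal.ofReal (2*t) * ENNReal.ofReal (2*t) := by
  obtain ⟨a, b⟩ := p
  obtain ⟨c, d⟩ := q
  replace hp : a ≠ b := hp
  replace hq : c ≠ d := hq
  have h1 : c = a → d ≠ b := fun h h' => hqp (by rw [h, h'])
  have h2 : c = b → d ≠ a := fun h h' => hqp' (by simp [h, h'])
  have key : ∀ (u v w : ℕ), u ≠ v → u ≠ w → v ≠ w →
      μ (Ev X t (u, v) ∩ Ev X t (u, w)) ≤ ENNReal.ofReal (2*t) * ENNReal.ofReal (2*t) :=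
    fun u v w hu1 hu2 hu3 => (prob_triple hmeas hindep hunif hu1 hu2 hu3 ht).le
  have swab : ∀ u v : ℕ, Ev X t (u, v) = Ev X t (v, u) := by
    intro u v; ext ω; simp only [Ev, mem_setOf_eq, nint_sub_comm]
  by_cases hac : a = c
  · subst hac
    exact key a b d hp (fun h => hq h) (fun h => h1 rfl (h.symm ▸ rfl))
  by_cases had : a = d
  · subst had
    rw [show Ev X t (c, a) = Ev X t (a, c) from swab c a]
    exact key a b c hp (fun h => hac h) (fun h => h2 h.symm rfl)
  by_cases hbc : b = c
  · subst hbc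
    rw [show Ev X t (a, b) = Ev X t (b, a) from swab a b]
    exact key b a d (fun h => hp h.symm) hq had
  by_cases hbd : b = d
  · subst hbd
    rw [show Ev X t (a, b) = Ev X t (b, a) from swab a b,
      show Ev X t (c, b) = Ev X t (b, c) from swab c b]
    exact key b a c (fun h => hp h.symm) (fun h => hbc h) hac
  · rw [prob_disjoint hmeas hindep hunif hac had hbc hbd ht,
      prob_pair hmeas hindep hunif hp ht, prob_pair hmeas hindep hunif hq ht]

/-- indicator of the event -/
noncomputable def ind (X : ℕ → Ω → ℝ) (t : ℝ) (p : ℕ × ℕ) : Ω → ℝ :=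
  (Ev X t p).indicator (fun _ => (1:ℝ))

include hmeas in
lemma integrable_ind (t : ℝ) (p : ℕ × ℕ) : Integrable (ind X t p) μ :=
  (integrable_const (1:ℝ)).indicator (measurableSet_Ev hmeas t p)

include hmeas in
lemma integral_ind (t : ℝ) (p : ℕ × ℕ) : ∫ ω, ind X t p ω ∂μ = (μ (Ev X t p)).toReal := by
  rw [ind, integral_indicator_const (1:ℝ) (measurableSet_Ev hmeas t p), smul_eq_mul, mul_one, measureReal_def]

lemma ind_mul_ind (t : ℝ) (p q : ℕ × ℕ) (ω : Ω) :
    ind X t p ω * ind X t q ω = (Ev X t p ∩ Ev X t q).indicator (fun _ => (1:ℝ)) ω := by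
  simp only [ind, Set.indicator_apply, Set.mem_inter_iff]
  by_cases h1 : ω ∈ Ev X t p <;> by_cases h2 : ω ∈ Ev X t q <;> simp [h1, h2]

include hmeas in
lemma integrable_ind_mul (t : ℝ) (p q : ℕ × ℕ) :
    Integrable (fun ω => ind X t p ω * ind X t q ω) μ := by
  simp only [funext (ind_mul_ind t p q)]
  exact (integrable_const (1:ℝ)).indicator
    ((measurableSet_Ev hmeas t p).inter (measurableSet_Ev hmeas t q))

include hmeas in
lemma integral_ind_mul (t : ℝ) (p q : ℕ × ℕ) :
    ∫ ω, ind X t p ω * ind X t q ω ∂μ = (μ (Ev X t p ∩ Ev X t q)).toReal := by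
  simp only [funext (ind_mul_ind t p q)]
  rw [integral_indicator_const (1:ℝ)
    ((measurableSet_Ev hmeas t p).inter (measurableSet_Ev hmeas t q)), smul_eq_mul, mul_one, measureReal_def]

include hmeas hindep hunif in
lemma moment_bound (P : Finset (ℕ × ℕ)) (hP1 : ∀ p ∈ P, p.1 ≠ p.2) (hP2 : ∀ p ∈ P, p.swap ∈ P)
    {t : ℝ} (c : ℝ) (ht0 : 0 ≤ t) (ht : t ≤ 1/2) :
    ∫ ω, ((∑ p ∈ P, ind X t p ω) - c)^2 ∂μ
      ≤ 4*t*P.card + (2*t*P.card - c)^2 := by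
  set T : ℝ := (P.card : ℝ) with hT
  have hT0 : (0:ℝ) ≤ T := Nat.cast_nonneg _
  have h2t : (0:ℝ) ≤ 2*t := by linarith
  -- integral of W
  have hWint : Integrable (fun ω => ∑ p ∈ P, ind X t p ω) μ :=
    integrable_finset_sum _ (fun p _ => integrable_ind hmeas t p)
  have hIW : ∫ ω, (∑ p ∈ P, ind X t p ω) ∂μ = 2*t*T := by
    rw [integral_finset_sum _ (fun p _ => integrable_ind hmeas t p)]
    have : ∀ p ∈ P, ∫ ω, ind X t p ω ∂μ = 2*t := by
      intro p hp
      rw [integral_ind hmeas, show p = (p.1, p.2) from rfl, prob_pair hmeas hindep hunif (hP1 p hp) ht,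
        ENNReal.toReal_ofReal h2t]
    rw [Finset.sum_congr rfl this, Finset.sum_const, nsmul_eq_mul]
    ring
  -- the square as a double sum
  have hsq : (fun ω => (∑ p ∈ P, ind X t p ω)^2)
      = fun ω => ∑ p ∈ P, ∑ q ∈ P, ind X t p ω * ind X t q ω := by
    funext ω
    rw [sq, Finset.sum_mul_sum]
  have hW2int : Integrable (fun ω => (∑ p ∈ P, ind X t p ω)^2) μ := by
    rw [hsq]
    exact integrable_finset_sum _ (fun p _ =>
      integrable_finset_sum _ (fun q _ => integrable_ind_mul hmeas t p q))
  -- integral of W^2 bounded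
  have hIW2 : ∫ ω, (∑ p ∈ P, ind X t p ω)^2 ∂μ ≤ 2*T*(2*t) + T*(T*((2*t)*(2*t))) := by
    rw [hsq]
    rw [integral_finset_sum _ (fun p _ =>
      integrable_finset_sum _ (fun q _ => integrable_ind_mul hmeas t p q))]
    have inner : ∀ p ∈ P, ∑ q ∈ P, ∫ ω, ind X t p ω * ind X t q ω ∂μ
        ≤ 2*(2*t) + T*((2*t)*(2*t)) := by
      intro p hp
      rw [Finset.sum_congr rfl (fun q _ => integral_ind_mul hmeas t p q)]
      rw [← Finset.sum_filter_add_sum_filter_not P (fun q => q = p ∨ q = p.swap)]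
      have hb1 : ∑ q ∈ P.filter (fun q => q = p ∨ q = p.swap),
          (μ (Ev X t p ∩ Ev X t q)).toReal ≤ 2*(2*t) := by
        have hcard : (P.filter (fun q => q = p ∨ q = p.swap)).card ≤ 2 := by
          refine le_trans (Finset.card_le_card (fun q hq => ?_)) (Finset.card_insert_le p {p.swap} |>.trans (by simp))
          rcases (Finset.mem_filter.mp hq).2 with h | h
          · simp [h]
          · simp [h]
        calc ∑ q ∈ P.filter (fun q => q = p ∨ q = p.swap), (μ (Ev X t p ∩ Ev X t q)).toReal
            ≤ ∑ q ∈ P.filter (fun q => q = p ∨ q = p.swap), 2*t := by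
              refine Finset.sum_le_sum (fun q hq => ?_)
              have : μ (Ev X t p ∩ Ev X t q) ≤ μ (Ev X t p) :=
                measure_mono Set.inter_subset_left
              have h2 : μ (Ev X t p) = ENNReal.ofReal (2*t) := by
                rw [show p = (p.1, p.2) from rfl]
                exact prob_pair hmeas hindep hunif (hP1 p hp) ht
              calc (μ (Ev X t p ∩ Ev X t q)).toReal
                  ≤ (μ (Ev X t p)).toReal :=
                    ENNReal.toReal_mono (by rw [h2]; exact ENNReal.ofReal_ne_top) this
                _ = 2*t := by rw [h2, ENNReal.toReal_ofReal h2t]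
          _ ≤ 2*(2*t) := by
              rw [Finset.sum_const, nsmul_eq_mul]
              have hc2 : ((P.filter (fun q => q = p ∨ q = p.swap)).card : ℝ) ≤ 2 := by
                exact_mod_cast hcard
              nlinarith
      have hb2 : ∑ q ∈ P.filter (fun q => ¬(q = p ∨ q = p.swap)),
          (μ (Ev X t p ∩ Ev X t q)).toReal ≤ T*((2*t)*(2*t)) := by
        calc ∑ q ∈ P.filter (fun q => ¬(q = p ∨ q = p.swap)), (μ (Ev X t p ∩ Ev X t q)).toReal
            ≤ ∑ q ∈ P.filter (fun q => ¬(q = p ∨ q = p.swap)), (2*t)*(2*t) := by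
              refine Finset.sum_le_sum (fun q hq => ?_)
              obtain ⟨hqP, hq2⟩ := Finset.mem_filter.mp hq
              push_neg at hq2
              have hle := prob_inter_le hmeas hindep hunif (hP1 p hp) (hP1 q hqP) hq2.1 hq2.2 ht
              calc (μ (Ev X t p ∩ Ev X t q)).toReal
                  ≤ (ENNReal.ofReal (2*t) * ENNReal.ofReal (2*t)).toReal :=
                    ENNReal.toReal_mono (by
                      rw [← ENNReal.ofReal_mul h2t]; exact ENNReal.ofReal_ne_top) hle
                _ = (2*t)*(2*t) := by
                    rw [ENNReal.toReal_mul, ENNReal.toReal_ofReal h2t]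
          _ ≤ T*((2*t)*(2*t)) := by
              rw [Finset.sum_const, nsmul_eq_mul]
              have hcard : ((P.filter (fun q => ¬(q = p ∨ q = p.swap))).card : ℝ) ≤ T :=
                Nat.cast_le.mpr (Finset.card_le_card (Finset.filter_subset _ _))
              nlinarith
      linarith
    rw [Finset.sum_congr rfl (fun p _ => integral_finset_sum _
      (fun q _ => integrable_ind_mul hmeas t p q))]
    calc ∑ p ∈ P, ∑ q ∈ P, ∫ ω, ind X t p ω * ind X t q ω ∂μ
        ≤ ∑ p ∈ P, (2*(2*t) + T*((2*t)*(2*t))) := Finset.sum_le_sum inner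
      _ = T * (2*(2*t) + T*((2*t)*(2*t))) := by rw [Finset.sum_const, nsmul_eq_mul]
      _ = 2*T*(2*t) + T*(T*((2*t)*(2*t))) := by ring
  -- expand the square
  have hexp : ∫ ω, ((∑ p ∈ P, ind X t p ω) - c)^2 ∂μ
      = (∫ ω, (∑ p ∈ P, ind X t p ω)^2 ∂μ) - 2*c*(2*t*T) + c^2 := by
    have : (fun ω => ((∑ p ∈ P, ind X t p ω) - c)^2)
        = fun ω => ((∑ p ∈ P, ind X t p ω)^2 - (2*c)*(∑ p ∈ P, ind X t p ω)) + c^2 := by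
      funext ω; ring
    have hA : Integrable (fun ω => (∑ p ∈ P, ind X t p ω)^2
        - (2*c)*(∑ p ∈ P, ind X t p ω)) μ := hW2int.sub (hWint.const_mul (2*c))
    rw [this, integral_add hA (integrable_const _),
      integral_sub hW2int (hWint.const_mul (2*c)), MeasureTheory.integral_const_mul, hIW,
      integral_const, probReal_univ, smul_eq_mul, one_mul]
  rw [hexp]
  nlinarith [hIW2]

include hmeas in
lemma integrable_sq_dev (P : Finset (ℕ × ℕ)) (t c : ℝ) :
    Integrable (fun ω => ((∑ p ∈ P, ind X t p ω) - c)^2) μ := by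
  have hWint : Integrable (fun ω => ∑ p ∈ P, ind X t p ω) μ :=
    integrable_finset_sum _ (fun p _ => integrable_ind hmeas t p)
  have hsq : (fun ω => (∑ p ∈ P, ind X t p ω)^2)
      = fun ω => ∑ p ∈ P, ∑ q ∈ P, ind X t p ω * ind X t q ω := by
    funext ω; rw [sq, Finset.sum_mul_sum]
  have hW2int : Integrable (fun ω => (∑ p ∈ P, ind X t p ω)^2) μ := by
    rw [hsq]
    exact integrable_finset_sum _ (fun p _ =>
      integrable_finset_sum _ (fun q _ => integrable_ind_mul hmeas t p q))
  have h : (fun ω => ((∑ p ∈ P, ind X t p ω) - c)^2)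
      = fun ω => ((∑ p ∈ P, ind X t p ω)^2 - (2*c)*(∑ p ∈ P, ind X t p ω)) + c^2 := by
    funext ω; ring
  rw [h]
  exact (hW2int.sub (hWint.const_mul (2*c))).add (integrable_const _)

/-- the pair-correlation counting function -/
noncomputable def cnt (X : ℕ → Ω → ℝ) (ω : Ω) (u : ℝ) (N : ℕ) : ℕ :=
  ((Finset.Icc 1 N).offDiag.filter (fun p => nint (X p.1 ω - X p.2 ω) ≤ u)).card

lemma cnt_cast (ω : Ω) (u : ℝ) (N : ℕ) :
    ((cnt X ω u N : ℝ)) = ∑ p ∈ (Finset.Icc 1 N).offDiag, ind X u p ω := by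
  classical
  rw [cnt, Finset.card_filter]
  push_cast
  refine Finset.sum_congr rfl (fun p _ => ?_)
  rw [ind, Set.indicator_apply]
  by_cases h : nint (X p.1 ω - X p.2 ω) ≤ u
  · simp [h, Ev, Set.mem_setOf_eq]
  · simp [h, Ev, Set.mem_setOf_eq]

lemma cnt_mono (ω : Ω) {u u' : ℝ} {N N' : ℕ} (hu : u ≤ u') (hN : N ≤ N') :
    cnt X ω u N ≤ cnt X ω u' N' := by
  apply Finset.card_le_card
  intro p hp
  obtain ⟨hp1, hp2⟩ := Finset.mem_filter.mp hp
  obtain ⟨h1, h2, h3⟩ := Finset.mem_offDiag.mp hp1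
  exact Finset.mem_filter.mpr ⟨Finset.mem_offDiag.mpr
    ⟨Finset.Icc_subset_Icc_right hN h1, Finset.Icc_subset_Icc_right hN h2, h3⟩, hp2.trans hu⟩

include hmeas in
lemma measurable_cnt (u : ℝ) (N : ℕ) : Measurable (fun ω => (cnt X ω u N : ℝ)) := by
  have h : (fun ω => (cnt X ω u N : ℝ))
      = fun ω => ∑ p ∈ (Finset.Icc 1 N).offDiag, ind X u p ω :=
    funext (fun ω => cnt_cast ω u N)
  rw [h]
  exact Finset.measurable_sum _ (fun p _ => measurable_const.indicator (measurableSet_Ev hmeas u p))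


/-- If the lintegrals of nonneg measurable functions are summable, then a.e. they tend to 0. -/
lemma ae_tendsto_zero_of_summable {g : ℕ → Ω → ℝ} (hmeasg : ∀ K, Measurable (g K))
    (hnn : ∀ K ω, 0 ≤ g K ω)
    (hsum : ∑' K, ∫⁻ ω, ENNReal.ofReal (g K ω) ∂μ ≠ ⊤) :
    ∀ᵐ ω ∂μ, Tendsto (fun K => g K ω) atTop (𝓝 0) := by
  have h1 : ∫⁻ ω, ∑' K, ENNReal.ofReal (g K ω) ∂μ ≠ ⊤ := by
    rw [lintegral_tsum (fun K => ((hmeasg K).ennreal_ofReal).aemeasurable)]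
    exact hsum
  have h2 : ∀ᵐ ω ∂μ, ∑' K, ENNReal.ofReal (g K ω) < ⊤ :=
    ae_lt_top (Measurable.ennreal_tsum (fun K => (hmeasg K).ennreal_ofReal)) h1
  filter_upwards [h2] with ω hω
  have h3 : Tendsto (fun K => ENNReal.ofReal (g K ω)) atTop (𝓝 0) :=
    ENNReal.tendsto_atTop_zero_of_tsum_ne_top hω.ne
  have h4 : Tendsto (fun K => (ENNReal.ofReal (g K ω)).toReal) atTop (𝓝 0) := by
    have := (ENNReal.tendsto_toReal (by simp : (0:ENNReal) ≠ ⊤)).comp h3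
    exact this
  refine h4.congr (fun K => ?_)
  exact ENNReal.toReal_ofReal (hnn K ω)


include hmeas hindep hunif in
lemma as_subseq {s : ℝ} (hs : 0 < s) :
    ∀ᵐ ω ∂μ, Tendsto (fun K : ℕ =>
      ((cnt X ω (s/((K:ℝ)^2)) (K^2) : ℝ))/((K:ℝ)^2)) atTop (𝓝 (2*s)) := by
  set K₀ : ℕ := max 1 (Nat.ceil (2*s)) with hK₀def
  have hK₀1 : 1 ≤ K₀ := le_max_left _ _
  have hK₀s : 2*s ≤ (K₀:ℝ) := by
    refine le_trans (Nat.le_ceil _) ?_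
    exact_mod_cast le_max_right 1 (Nat.ceil (2*s))
  -- the squared deviation along the shifted subsequence
  set g : ℕ → Ω → ℝ := fun K ω =>
    ((cnt X ω (s/((((K+K₀)^2 : ℕ)):ℝ)) ((K+K₀)^2) : ℝ)/((((K+K₀)^2 : ℕ)):ℝ) - 2*s)^2 with hgdef
  -- per-K facts
  have hNfact : ∀ K : ℕ, (1:ℝ) ≤ (((K+K₀)^2 : ℕ):ℝ) ∧ 2*s ≤ (((K+K₀)^2 : ℕ):ℝ)
      ∧ ((K:ℝ)+1)^2 ≤ (((K+K₀)^2 : ℕ):ℝ) := by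
    intro K
    have hpos : 0 < K + K₀ := lt_of_lt_of_le Nat.zero_lt_one (le_trans hK₀1 (Nat.le_add_left _ _))
    have h1 : 1 ≤ (K+K₀)^2 := Nat.one_le_iff_ne_zero.mpr (pow_ne_zero _ hpos.ne')
    have h2 : K₀ ≤ (K+K₀)^2 := le_trans (Nat.le_add_left _ _) (Nat.le_self_pow two_ne_zero _)
    have h3 : (K+1)^2 ≤ (K+K₀)^2 := Nat.pow_le_pow_left (by omega) 2
    refine ⟨by exact_mod_cast h1, le_trans hK₀s (by exact_mod_cast h2), ?_⟩
    have : (((K+1)^2 : ℕ):ℝ) ≤ (((K+K₀)^2 : ℕ):ℝ) := by exact_mod_cast h3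
    push_cast at this ⊢
    linarith
  -- integral bound
  have hgint : ∀ K : ℕ, Integrable (g K) μ ∧
      ∫ ω, g K ω ∂μ ≤ (4*s+4*s^2) * (1/((K:ℝ)+1)^2) := by
    intro K
    obtain ⟨hN1, hN2s, hNg⟩ := hNfact K
    set N : ℕ := (K+K₀)^2 with hNdef
    set NR : ℝ := ((N : ℕ):ℝ) with hNRdef
    have hNR0 : (0:ℝ) < NR := by linarith
    have ht0 : 0 ≤ s/NR := by positivity
    have ht : s/NR ≤ 1/2 := by
      rw [div_le_div_iff₀ hNR0 (by norm_num : (0:ℝ) < 2)]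
      linarith
    set P : Finset (ℕ × ℕ) := (Finset.Icc 1 N).offDiag with hPdef
    have hP1 : ∀ p ∈ P, p.1 ≠ p.2 := fun p hp => (Finset.mem_offDiag.mp hp).2.2
    have hP2 : ∀ p ∈ P, p.swap ∈ P := by
      intro p hp
      obtain ⟨h1, h2, h3⟩ := Finset.mem_offDiag.mp hp
      exact Finset.mem_offDiag.mpr ⟨h2, h1, fun h => h3 (by simpa using h.symm)⟩
    have hcardIcc : (Finset.Icc 1 N).card = N := by rw [Nat.card_Icc]; omega
    have hNpos : 0 < N := by
      have h1N : (1:ℝ) ≤ (N:ℝ) := by rw [← hNRdef]; exact hN1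
      have : (1:ℕ) ≤ N := by exact_mod_cast h1N
      omega
    have hNN : N ≤ N * N := Nat.le_mul_of_pos_left N hNpos
    have hcard : (P.card : ℝ) = NR^2 - NR := by
      rw [hPdef, Finset.offDiag_card, hcardIcc, Nat.cast_sub hNN]
      push_cast
      ring
    -- pointwise identity
    have hpt : ∀ ω, g K ω = ((∑ p ∈ P, ind X (s/NR) p ω) - 2*s*NR)^2 * ((NR^2)⁻¹) := by
      intro ω
      rw [hgdef]
      simp only []
      rw [show ((K+K₀)^2) = N from rfl, ← hNRdef, cnt_cast ω (s/NR) N,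
        show (NR^2)⁻¹ = (NR⁻¹)^2 by rw [← inv_pow], ← mul_pow]
      congr 1
      rw [sub_mul, div_eq_mul_inv]
      congr 1
      rw [mul_assoc, mul_inv_cancel₀ (ne_of_gt hNR0), mul_one]
    have hint : Integrable (g K) μ := by
      have := (integrable_sq_dev (μ := μ) hmeas P (s/NR) (2*s*NR)).mul_const ((NR^2)⁻¹)
      exact this.congr (Filter.EventuallyEq.of_eq (funext (fun ω => (hpt ω).symm)))
    refine ⟨hint, ?_⟩
    have hIeq : ∫ ω, g K ω ∂μ
        = (∫ ω, ((∑ p ∈ P, ind X (s/NR) p ω) - 2*s*NR)^2 ∂μ) * ((NR^2)⁻¹) := by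
      rw [show g K = fun ω => ((∑ p ∈ P, ind X (s/NR) p ω) - 2*s*NR)^2 * ((NR^2)⁻¹)
        from funext hpt]
      exact integral_mul_const _ _
    have hmom := moment_bound hmeas hindep hunif P hP1 hP2 (2*s*NR) ht0 ht
    have hTt : (s/NR) * (P.card : ℝ) = s*NR - s := by
      rw [hcard]
      field_simp
    have hmom2 : ∫ ω, ((∑ p ∈ P, ind X (s/NR) p ω) - 2*s*NR)^2 ∂μ ≤ 4*s*NR + 4*s^2 := by
      refine le_trans hmom ?_
      have h1 : 2*(s/NR)*(P.card : ℝ) - 2*s*NR = -(2*s) := by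
        have : 2*((s/NR) * (P.card : ℝ)) = 2*(s*NR - s) := by rw [hTt]
        linarith [this]
      have h2 : 4*(s/NR)*(P.card : ℝ) = 4*(s*NR - s) := by
        have : 4*((s/NR) * (P.card : ℝ)) = 4*(s*NR - s) := by rw [hTt]
        linarith [this]
      rw [show (2*(s/NR)*(P.card : ℝ) - 2*s*NR)^2 = (-(2*s))^2 by rw [h1]]
      nlinarith [hs.le]
    rw [hIeq]
    have hstep : (∫ ω, ((∑ p ∈ P, ind X (s/NR) p ω) - 2*s*NR)^2 ∂μ) * ((NR^2)⁻¹)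
        ≤ (4*s*NR + 4*s^2) * ((NR^2)⁻¹) := by
      apply mul_le_mul_of_nonneg_right hmom2 (by positivity)
    refine le_trans hstep ?_
    rw [← div_eq_mul_inv, mul_one_div]
    calc (4*s*NR + 4*s^2)/NR^2
        ≤ ((4*s+4*s^2)*NR)/NR^2 := by
          apply div_le_div_of_nonneg_right ?_ (by positivity)
          nlinarith [mul_nonneg (by positivity : (0:ℝ) ≤ 4*s^2) (by linarith : (0:ℝ) ≤ NR - 1)]
      _ = (4*s+4*s^2)/NR := by
          rw [sq]
          field_simp
      _ ≤ (4*s+4*s^2)/(((K:ℝ)+1)^2) := by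
          apply div_le_div_of_nonneg_left (by positivity) (by positivity) hNg
  -- summability
  have hb : Summable (fun K : ℕ => (4*s+4*s^2) * (1/((K:ℝ)+1)^2)) := by
    have h1 : Summable (fun n : ℕ => 1/((n:ℝ)+1)^2) := by
      have h2 := (summable_nat_add_iff 1).mpr (Real.summable_one_div_nat_pow.mpr one_lt_two)
      exact h2.congr (fun n => by push_cast; ring)
    exact h1.mul_left _
  have hmeasg : ∀ K, Measurable (g K) := by
    intro K
    rw [hgdef]
    exact (((measurable_cnt hmeas _ _).div_const _).sub_const _).pow_const 2
  have hsum : ∑' K, ∫⁻ ω, ENNReal.ofReal (g K ω) ∂μ ≠ ⊤ := by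
    have heq : ∀ K, ∫⁻ ω, ENNReal.ofReal (g K ω) ∂μ = ENNReal.ofReal (∫ ω, g K ω ∂μ) :=
      fun K => (ofReal_integral_eq_lintegral_ofReal (hgint K).1
        (Filter.Eventually.of_forall (fun ω => sq_nonneg _))).symm
    have hle : ∑' K, ∫⁻ ω, ENNReal.ofReal (g K ω) ∂μ
        ≤ ∑' K : ℕ, ENNReal.ofReal ((4*s+4*s^2) * (1/((K:ℝ)+1)^2)) := by
      refine ENNReal.tsum_le_tsum (fun K => ?_)
      rw [heq K]
      exact ENNReal.ofReal_le_ofReal (hgint K).2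
    refine ne_top_of_le_ne_top ?_ hle
    rw [← ENNReal.ofReal_tsum_of_nonneg (fun K => by positivity) hb]
    exact ENNReal.ofReal_ne_top
  have hae := ae_tendsto_zero_of_summable hmeasg (fun K ω => sq_nonneg _) hsum
  filter_upwards [hae] with ω hω
  -- convert: squared deviation → 0 implies convergence, along the shift
  have habs : Tendsto (fun K => |(cnt X ω (s/((((K+K₀)^2 : ℕ)):ℝ)) ((K+K₀)^2) : ℝ)
      /((((K+K₀)^2 : ℕ)):ℝ) - 2*s|) atTop (𝓝 0) := by
    have hsq := (Real.continuous_sqrt.tendsto' 0 0 (by simp)).comp hω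
    refine hsq.congr (fun K => ?_)
    simp only [Function.comp_apply, hgdef]
    exact Real.sqrt_sq_eq_abs _
  have hdiff : Tendsto (fun K => (cnt X ω (s/((((K+K₀)^2 : ℕ)):ℝ)) ((K+K₀)^2) : ℝ)
      /((((K+K₀)^2 : ℕ)):ℝ) - 2*s) atTop (𝓝 0) :=
    (tendsto_zero_iff_abs_tendsto_zero _).mpr habs
  have hshift : Tendsto (fun K => (cnt X ω (s/((((K+K₀)^2 : ℕ)):ℝ)) ((K+K₀)^2) : ℝ)
      /((((K+K₀)^2 : ℕ)):ℝ)) atTop (𝓝 (2*s)) := by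
    have := hdiff.add_const (2*s)
    simpa using this
  have hfull : Tendsto (fun K => (cnt X ω (s/(((K^2 : ℕ)):ℝ)) (K^2) : ℝ)
      /(((K^2 : ℕ)):ℝ)) atTop (𝓝 (2*s)) :=
    (tendsto_add_atTop_iff_nat K₀).mp hshift
  refine hfull.congr (fun K => ?_)
  push_cast
  rfl

end Indep

lemma det_lemma (d : ℝ → ℕ → ℕ)
    (hmono : ∀ {u u' : ℝ} {N N' : ℕ}, u ≤ u' → N ≤ N' → d u N ≤ d u' N')
    (hq : ∀ q : ℚ, 0 < q → Tendsto (fun K : ℕ =>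
        ((d ((q:ℝ)/((K:ℝ)^2)) (K^2) : ℝ))/((K:ℝ)^2)) atTop (𝓝 (2*(q:ℝ))))
    {s : ℝ} (hs : 0 < s) :
    Tendsto (fun N : ℕ => ((d (s/(N:ℝ)) N : ℝ))/(N:ℝ)) atTop (𝓝 (2*s)) := by
  rw [Metric.tendsto_nhds]
  intro ε hε
  obtain ⟨q, hq1, hq2⟩ := exists_rat_btwn (show s < s + ε/4 by linarith)
  have hq0 : 0 < q := by
    have : (0:ℝ) < (q:ℝ) := hs.trans hq1
    exact_mod_cast this
  have hmin : 0 < min s ε := lt_min hs hε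
  obtain ⟨q', hq1', hq2'⟩ := exists_rat_btwn (show s - min s ε/4 < s by linarith)
  have hq'0R : (0:ℝ) < (q':ℝ) := by
    have h1 := min_le_left s ε
    linarith
  have hq'0 : 0 < q' := by exact_mod_cast hq'0R
  have h2q : 2*(q:ℝ) < 2*s + ε/2 := by linarith
  have h2q' : 2*s - ε/2 < 2*(q':ℝ) := by
    have := min_le_right s ε
    linarith
  -- ratio limits
  have h0 : Tendsto (fun K : ℕ => ((K:ℝ)+1)/(K:ℝ)) atTop (𝓝 1) := by
    have hcongr : ∀ᶠ K : ℕ in atTop, (1:ℝ) + 1/(K:ℝ) = ((K:ℝ)+1)/(K:ℝ) := by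
      filter_upwards [eventually_gt_atTop 0] with K hK
      have : (K:ℝ) ≠ 0 := Nat.cast_ne_zero.mpr hK.ne'
      field_simp
    rw [← tendsto_congr' hcongr]
    simpa using (tendsto_const_nhds (x := (1:ℝ))).add tendsto_one_div_atTop_nhds_zero_nat
  have hratio : Tendsto (fun K : ℕ => ((K:ℝ)+1)^2/(K:ℝ)^2) atTop (𝓝 1) := by
    have := h0.pow 2
    simpa [div_pow] using this
  have hratio' : Tendsto (fun K : ℕ => (K:ℝ)^2/((K:ℝ)+1)^2) atTop (𝓝 1) := by
    have := hratio.inv₀ one_ne_zero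
    simpa [inv_div] using this
  -- shifted subsequence limit
  have hUa : Tendsto (fun K : ℕ =>
      ((d ((q:ℝ)/(((K:ℝ)+1)^2)) ((K+1)^2) : ℝ))/(((K:ℝ)+1)^2)) atTop (𝓝 (2*(q:ℝ))) := by
    have := (hq q hq0).comp (tendsto_add_atTop_nat 1)
    refine this.congr (fun K => ?_)
    simp only [Function.comp_apply]
    push_cast
    rfl
  have hU : Tendsto (fun K : ℕ =>
      (((d ((q:ℝ)/(((K:ℝ)+1)^2)) ((K+1)^2) : ℝ))/(((K:ℝ)+1)^2)) * (((K:ℝ)+1)^2/(K:ℝ)^2))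
      atTop (𝓝 (2*(q:ℝ))) := by
    have := hUa.mul hratio
    simpa using this
  have hL : Tendsto (fun K : ℕ =>
      (((d ((q':ℝ)/((K:ℝ)^2)) (K^2) : ℝ))/((K:ℝ)^2)) * ((K:ℝ)^2/((K:ℝ)+1)^2))
      atTop (𝓝 (2*(q':ℝ))) := by
    have := (hq q' hq'0).mul hratio'
    simpa using this
  -- eventual inequalities
  have E1 : ∀ᶠ K : ℕ in atTop, s*((K:ℝ)+1)^2 < (q:ℝ)*(K:ℝ)^2 := by
    have h1q : (1:ℝ) < (q:ℝ)/s := (one_lt_div hs).mpr hq1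
    filter_upwards [hratio.eventually_lt_const h1q, eventually_gt_atTop 0] with K h hK
    have hK0 : (0:ℝ) < (K:ℝ)^2 := by positivity
    have := (div_lt_div_iff₀ hK0 hs).mp h
    nlinarith
  have E2 : ∀ᶠ K : ℕ in atTop, (q':ℝ)*((K:ℝ)+1)^2 < s*(K:ℝ)^2 := by
    have h1q : (1:ℝ) < s/(q':ℝ) := (one_lt_div hq'0R).mpr hq2'
    filter_upwards [hratio.eventually_lt_const h1q, eventually_gt_atTop 0] with K h hK
    have hK0 : (0:ℝ) < (K:ℝ)^2 := by positivity
    have := (div_lt_div_iff₀ hK0 hq'0R).mp h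
    nlinarith
  have EU := hU.eventually_lt_const (show 2*(q:ℝ) < 2*s + ε by linarith)
  have EL := hL.eventually_const_lt (show 2*s - ε < 2*(q':ℝ) by linarith)
  have hsqrt : Tendsto (fun N : ℕ => N.sqrt) atTop atTop := by
    refine tendsto_atTop_atTop.mpr (fun m => ⟨m^2, fun n hn => Nat.le_sqrt'.mpr hn⟩)
  have hFin := E1.and (E2.and (EU.and (EL.and (eventually_ge_atTop 1))))
  filter_upwards [hsqrt.eventually hFin, eventually_ge_atTop 1] with N hN hN1
  obtain ⟨h1, h2, h3, h4, hK1⟩ := hN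
  set K := N.sqrt with hKdef
  have hKN : K^2 ≤ N := Nat.sqrt_le' N
  have hNK : N < (K+1)^2 := by
    simpa [Nat.succ_eq_add_one] using Nat.lt_succ_sqrt' N
  have hN0 : (0:ℝ) < (N:ℝ) := by exact_mod_cast hN1
  have hK0 : (0:ℝ) < (K:ℝ) := by exact_mod_cast hK1
  have hKNR : ((K:ℝ))^2 ≤ (N:ℝ) := by exact_mod_cast hKN
  have hNKR : (N:ℝ) ≤ ((K:ℝ)+1)^2 := by
    have : (N:ℝ) < ((K+1:ℕ):ℝ)^2 := by exact_mod_cast hNK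
    push_cast at this
    linarith
  have hK20 : (0:ℝ) < (K:ℝ)^2 := by positivity
  have hK120 : (0:ℝ) < ((K:ℝ)+1)^2 := by positivity
  -- upper bound
  have hd1 : d (s/(N:ℝ)) N ≤ d ((q:ℝ)/(((K:ℝ)+1)^2)) ((K+1)^2) := by
    refine hmono ?_ hNK.le
    calc s/(N:ℝ) ≤ s/((K:ℝ)^2) := by
          apply div_le_div_of_nonneg_left hs.le hK20 hKNR
      _ ≤ (q:ℝ)/(((K:ℝ)+1)^2) := by
          rw [div_le_div_iff₀ hK20 hK120]
          nlinarith
  have hyU : (d (s/(N:ℝ)) N : ℝ)/(N:ℝ)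
      ≤ (((d ((q:ℝ)/(((K:ℝ)+1)^2)) ((K+1)^2) : ℝ))/(((K:ℝ)+1)^2)) * (((K:ℝ)+1)^2/(K:ℝ)^2) := by
    have hstep : (d (s/(N:ℝ)) N : ℝ)/(N:ℝ)
        ≤ (d ((q:ℝ)/(((K:ℝ)+1)^2)) ((K+1)^2) : ℝ)/((K:ℝ)^2) :=
      div_le_div₀ (Nat.cast_nonneg _) (Nat.cast_le.mpr hd1) hK20 hKNR
    calc (d (s/(N:ℝ)) N : ℝ)/(N:ℝ) ≤ _ := hstep
      _ = _ := by field_simp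
  -- lower bound
  have hd2 : d ((q':ℝ)/((K:ℝ)^2)) (K^2) ≤ d (s/(N:ℝ)) N := by
    refine hmono ?_ hKN
    rw [div_le_div_iff₀ hK20 hN0]
    nlinarith
  have hyL : (((d ((q':ℝ)/((K:ℝ)^2)) (K^2) : ℝ))/((K:ℝ)^2)) * ((K:ℝ)^2/((K:ℝ)+1)^2)
      ≤ (d (s/(N:ℝ)) N : ℝ)/(N:ℝ) := by
    have hstep : (d ((q':ℝ)/((K:ℝ)^2)) (K^2) : ℝ)/(((K:ℝ)+1)^2)
        ≤ (d (s/(N:ℝ)) N : ℝ)/(N:ℝ) :=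
      div_le_div₀ (Nat.cast_nonneg _) (Nat.cast_le.mpr hd2) hN0 hNKR
    calc (((d ((q':ℝ)/((K:ℝ)^2)) (K^2) : ℝ))/((K:ℝ)^2)) * ((K:ℝ)^2/((K:ℝ)+1)^2)
        = (d ((q':ℝ)/((K:ℝ)^2)) (K^2) : ℝ)/(((K:ℝ)+1)^2) := by field_simp
      _ ≤ _ := hstep
  rw [Real.dist_eq, abs_lt]
  constructor
  · have := lt_of_lt_of_le h4 hyL
    linarith
  · have := lt_of_le_of_lt hyU h3
    linarith

/-- A sequence of independent random variables, each uniformly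
distributed on [0,1], almost surely has Poissonian pair correlation. -/
theorem stmt10 {Ω : Type*} [MeasurableSpace Ω] (μ : Measure Ω) [IsProbabilityMeasure μ]
    (X : ℕ → Ω → ℝ) (hmeas : ∀ n, Measurable (X n))
    (hindep : ProbabilityTheory.iIndepFun X μ)
    (hunif : ∀ n, Measure.map (X n) μ = volume.restrict (Set.Icc (0 : ℝ) 1)) :
    ∀ᵐ ω ∂μ, ∀ s : ℝ, 0 < s →
      Tendsto (fun N : ℕ =>
        (((Finset.Icc 1 N ×ˢ Finset.Icc 1 N).filter
          (fun p => p.1 ≠ p.2 ∧ nint (X p.1 ω - X p.2 ω) ≤ s / N)).card : ℝ) / N)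
        atTop (nhds (2 * s)) := by
  have hunif' : ∀ n, Measure.map (X n) μ = unif := hunif
  have hae : ∀ᵐ ω ∂μ, ∀ q : ℚ, 0 < q → Tendsto (fun K : ℕ =>
      ((cnt X ω ((q:ℝ)/((K:ℝ)^2)) (K^2) : ℝ))/((K:ℝ)^2)) atTop (𝓝 (2*(q:ℝ))) := by
    rw [ae_all_iff]
    intro q
    by_cases hq : 0 < q
    · have hq' : (0:ℝ) < (q:ℝ) := by exact_mod_cast hq
      filter_upwards [as_subseq hmeas hindep hunif' hq'] with ω h _
      exact h
    · filter_upwards with ω h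
      exact absurd h hq
  filter_upwards [hae] with ω hω s hs
  have hdet := det_lemma (fun u N => cnt X ω u N)
      (fun {u u' N N'} hu hN => cnt_mono ω hu hN) hω hs
  refine hdet.congr (fun N => ?_)
  congr 1
  have hset : (Finset.Icc 1 N ×ˢ Finset.Icc 1 N).filter
        (fun p => p.1 ≠ p.2 ∧ nint (X p.1 ω - X p.2 ω) ≤ s/(N:ℝ))
      = (Finset.Icc 1 N).offDiag.filter (fun p => nint (X p.1 ω - X p.2 ω) ≤ s/(N:ℝ)) := by
    ext p
    simp only [Finset.mem_filter, Finset.mem_product, Finset.mem_offDiag]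
    tauto
  show ((cnt X ω (s/(N:ℝ)) N : ℕ) : ℝ) = _
  rw [show cnt X ω (s/(N:ℝ)) N = ((Finset.Icc 1 N).offDiag.filter
      (fun p => nint (X p.1 ω - X p.2 ω) ≤ s/(N:ℝ))).card from rfl, ← hset]
end

section
/- Let d ≥ 1. There exist constants c₂ > 0 and c₃ > 0, depending only on d, such that for every 0 < δ < 1/4 the function g : 𝕋^d → ℝ defined by g(x) = 1/(ω_d δ^d) if dist(x, 0) ≤ δ and g(x) = 0 otherwise satisfies: ĝ(0) = 1, and ĝ(k) ≥ c₂ for every k ∈ ℤ^d with 0 < ‖k‖_2 ≤ c₃/δ, where ĝ(k) = ∫_{𝕋^d} g(y) e^{−2πi⟨k,y⟩} dy (which is real since g is even). -/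
open Filter MeasureTheory

/-- The Euclidean (ℓ²) norm of a vector in ℝ^d. -/
noncomputable def e2norm {d : ℕ} (v : Fin d → ℝ) : ℝ := Real.sqrt (∑ i, (v i) ^ 2)

/-- The Euclidean distance on the torus ℝ^d/ℤ^d. -/
noncomputable def torusDist {d : ℕ} (x y : Fin d → ℝ) : ℝ :=
  ⨅ k : Fin d → ℤ, e2norm (fun i => x i - y i - (k i : ℝ))

/-- ω_d : the Lebesgue volume of the unit Euclidean ball in ℝ^d. -/
noncomputable def unitBallVol (d : ℕ) : ℝ :=
  (volume {v : Fin d → ℝ | e2norm v ≤ 1}).toReal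

/-- The k-th Fourier coefficient of a (1-periodic) function g on 𝕋^d, computed over
the fundamental domain [0,1)^d:  ĝ(k) = ∫_{𝕋^d} g(y) e^{-2πi⟨k,y⟩} dy. -/
noncomputable def fourierCoefTd {d : ℕ} (g : (Fin d → ℝ) → ℝ) (k : Fin d → ℤ) : ℂ :=
  ∫ y in (Set.univ.pi fun _ : Fin d => Set.Ico (0 : ℝ) 1),
    (g y : ℂ) * Complex.exp (-(2 * (Real.pi : ℂ) * Complex.I * ((∑ i, (k i : ℝ) * y i : ℝ) : ℂ)))

/-! ### Auxiliary lemmas -/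

section Aux

open Set Pointwise

lemma e2norm_nonneg' {d : ℕ} (v : Fin d → ℝ) : 0 ≤ e2norm v := Real.sqrt_nonneg _

lemma abs_le_e2norm' {d : ℕ} (v : Fin d → ℝ) (i : Fin d) : |v i| ≤ e2norm v := by
  rw [← Real.sqrt_sq_eq_abs]
  exact Real.sqrt_le_sqrt (Finset.single_le_sum (f := fun j => (v j)^2)
    (fun j _ => sq_nonneg _) (Finset.mem_univ i))

lemma e2norm_smul' {d : ℕ} (c : ℝ) (v : Fin d → ℝ) :
    e2norm (fun i => c * v i) = |c| * e2norm v := by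
  unfold e2norm
  rw [← Real.sqrt_sq_eq_abs, ← Real.sqrt_mul (sq_nonneg c), Finset.mul_sum]
  exact congrArg Real.sqrt (Finset.sum_congr rfl fun i _ => by ring)

lemma e2norm_neg' {d : ℕ} (v : Fin d → ℝ) : e2norm (fun i => -v i) = e2norm v := by
  unfold e2norm; exact congrArg Real.sqrt (Finset.sum_congr rfl fun i _ => by ring)

lemma e2norm_cauchy {d : ℕ} (k v : Fin d → ℝ) : |∑ i, k i * v i| ≤ e2norm k * e2norm v := by
  rw [← Real.sqrt_sq_eq_abs]
  unfold e2norm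
  rw [← Real.sqrt_mul (Finset.sum_nonneg fun i _ => sq_nonneg _)]
  exact Real.sqrt_le_sqrt (Finset.sum_mul_sq_le_sq_mul_sq _ _ _)

lemma e2norm_cont {d : ℕ} : Continuous fun v : Fin d → ℝ => e2norm v := by
  unfold e2norm
  exact Real.continuous_sqrt.comp (continuous_finset_sum _ fun i _ => ((continuous_apply i).pow 2))

lemma ball_isClosed {d : ℕ} (r : ℝ) : IsClosed {v : Fin d → ℝ | e2norm v ≤ r} :=
  isClosed_le e2norm_cont continuous_const

lemma ball_subset_pi {d : ℕ} (r : ℝ) :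
    {v : Fin d → ℝ | e2norm v ≤ r} ⊆ Set.univ.pi fun _ => Set.Icc (-r) r := by
  intro v hv i _
  have := (abs_le.mp ((abs_le_e2norm' v i).trans hv))
  exact ⟨this.1, this.2⟩

lemma ball_isCompact {d : ℕ} (r : ℝ) : IsCompact {v : Fin d → ℝ | e2norm v ≤ r} :=
  (isCompact_univ_pi fun _ => isCompact_Icc).of_isClosed_subset (ball_isClosed r) (ball_subset_pi r)

lemma ball_vol {d : ℕ} {δ : ℝ} (hδ : 0 < δ) :
    volume {v : Fin d → ℝ | e2norm v ≤ δ}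
      = ENNReal.ofReal (δ ^ d) * volume {v : Fin d → ℝ | e2norm v ≤ 1} := by
  have h : {v : Fin d → ℝ | e2norm v ≤ δ} = δ • {v : Fin d → ℝ | e2norm v ≤ 1} := by
    ext v
    rw [Set.mem_smul_set_iff_inv_smul_mem₀ hδ.ne']
    show e2norm v ≤ δ ↔ e2norm (fun i => δ⁻¹ * v i) ≤ 1
    rw [e2norm_smul', abs_of_pos (inv_pos.mpr hδ)]
    rw [inv_mul_le_iff₀ hδ, mul_one]
  rw [h, Measure.addHaar_smul]
  congr 2
  rw [abs_of_nonneg (pow_nonneg hδ.le _)]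
  congr 1
  simp

lemma ball_vol_lt_top {d : ℕ} (r : ℝ) : volume {v : Fin d → ℝ | e2norm v ≤ r} < ⊤ :=
  (ball_isCompact r).measure_lt_top

lemma ball_vol_pos {d : ℕ} (hd : 1 ≤ d) : 0 < volume {v : Fin d → ℝ | e2norm v ≤ 1} := by
  have hd0 : (0:ℝ) < d := by exact_mod_cast hd
  have hsub : (Set.univ.pi fun _ : Fin d => Set.Icc (-(1/(d:ℝ))) (1/(d:ℝ)))
      ⊆ {v : Fin d → ℝ | e2norm v ≤ 1} := by
    intro v hv
    have h1 : ∀ i, (v i)^2 ≤ (1/(d:ℝ))^2 := fun i =>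
      sq_le_sq' (hv i (Set.mem_univ i)).1 (hv i (Set.mem_univ i)).2
    show e2norm v ≤ 1
    unfold e2norm
    have h2 : (∑ i, (v i)^2) ≤ ∑ _i : Fin d, (1/(d:ℝ))^2 :=
      Finset.sum_le_sum fun i _ => h1 i
    have h3 : (∑ _i : Fin d, (1/(d:ℝ))^2) = (d:ℝ) * (1/(d:ℝ))^2 := by
      simp [Finset.sum_const]
    have h4 : (d:ℝ) * (1/(d:ℝ))^2 ≤ 1 := by
      have h5 : (1:ℝ) ≤ d := by exact_mod_cast hd
      rw [div_pow, one_pow, sq]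
      rw [mul_one_div]
      rw [div_le_one (by positivity)]
      nlinarith
    exact Real.sqrt_le_one.mpr (h2.trans (h3 ▸ h4))
  calc (0:ENNReal) < volume (Set.univ.pi fun _ : Fin d => Set.Icc (-(1/(d:ℝ))) (1/(d:ℝ))) := by
        rw [volume_pi_pi]
        rw [Finset.prod_const]
        refine pos_iff_ne_zero.mpr (pow_ne_zero _ ?_)
        rw [Real.volume_Icc]
        simp only [ne_eq, ENNReal.ofReal_eq_zero, not_le]
        have : (0:ℝ) < 1/(d:ℝ) := by positivity
        linarith
    _ ≤ _ := measure_mono hsub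

instance vaddCC' {d : ℕ} (S : Submodule ℤ (Fin d → ℝ)) :
    VAddCommClass (Fin d → ℝ) (↥S) (Fin d → ℝ) :=
  ⟨fun a g x => by
    show a + ((g : Fin d → ℝ) + x) = (g : Fin d → ℝ) + (a + x)
    ring⟩

instance mVadd' {d : ℕ} (S : Submodule ℤ (Fin d → ℝ)) :
    MeasurableVAdd (↥S) (Fin d → ℝ) := by
  constructor
  · intro x
    show Measurable fun g : ↥S => (g : Fin d → ℝ) + x
    exact (measurable_subtype_coe).add_const _

instance vim' {d : ℕ} (S : Submodule ℤ (Fin d → ℝ)) :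
    VAddInvariantMeasure (↥S) (Fin d → ℝ) volume :=
  ⟨fun c s _hs => by
    show volume ((fun x => (c : Fin d → ℝ) + x) ⁻¹' s) = volume s
    exact measure_preimage_add volume _ s⟩

lemma shift_domain {d : ℕ} (F : (Fin d → ℝ) → ℂ)
    (hF : ∀ (m : Fin d → ℤ) (x : Fin d → ℝ), F (fun i => (m i : ℝ) + x i) = F x) :
    ∫ y in (Set.univ.pi fun _ : Fin d => Set.Ico (0:ℝ) 1), F y
      = ∫ y in (Set.univ.pi fun _ : Fin d => Set.Ico (-(1/2):ℝ) (1/2)), F y := by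
  classical
  set b := Pi.basisFun ℝ (Fin d) with hb
  have h0 : IsAddFundamentalDomain (Submodule.span ℤ (Set.range ⇑b))
      (ZSpan.fundamentalDomain b) volume := ZSpan.isAddFundamentalDomain b volume
  have hD0 : ZSpan.fundamentalDomain b = Set.univ.pi fun _ : Fin d => Set.Ico (0:ℝ) 1 := by
    ext x
    simp [ZSpan.mem_fundamentalDomain, Set.mem_pi, hb]
  have h1 : IsAddFundamentalDomain (Submodule.span ℤ (Set.range ⇑b))
      ((fun _ : Fin d => (-(1/2):ℝ)) +ᵥ ZSpan.fundamentalDomain b) volume :=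
    h0.vadd_of_comm _
  have hD1 : ((fun _ : Fin d => (-(1/2):ℝ)) +ᵥ ZSpan.fundamentalDomain b)
      = Set.univ.pi fun _ : Fin d => Set.Ico (-(1/2):ℝ) (1/2) := by
    ext x
    rw [Set.mem_vadd_set_iff_neg_vadd_mem, hD0]
    constructor
    · intro h i _
      have := h i (Set.mem_univ i)
      simp only [Pi.vadd_apply, Pi.add_apply, Pi.neg_apply, vadd_eq_add, neg_neg,
        Set.mem_Ico] at this ⊢
      constructor <;> linarith [this.1, this.2]
    · intro h i _
      have := h i (Set.mem_univ i)
      simp only [Pi.vadd_apply, Pi.add_apply, Pi.neg_apply, vadd_eq_add, neg_neg,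
        Set.mem_Ico] at this ⊢
      constructor <;> linarith [this.1, this.2]
  have hinv : ∀ (g : Submodule.span ℤ (Set.range ⇑b)) (x : Fin d → ℝ), F (g +ᵥ x) = F x := by
    intro g x
    have hg : ∀ i, ∃ z : ℤ, (z:ℝ) = (g : Fin d → ℝ) i := by
      intro i
      have := (b.mem_span_iff_repr_mem ℤ (g : Fin d → ℝ)).mp g.2 i
      simpa [hb, Pi.basisFun_repr] using this
    choose m hm using hg
    have : (g +ᵥ x) = fun i => (m i : ℝ) + x i := by
      funext i
      show (g : Fin d → ℝ) i + x i = _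
      rw [hm i]
    rw [this, hF]
  rw [← hD0, ← hD1]
  exact h0.setIntegral_eq h1 hinv

lemma torusDist_bddBelow' {d : ℕ} (x y : Fin d → ℝ) :
    BddBelow (Set.range fun k : Fin d → ℤ => e2norm (fun i => x i - y i - (k i : ℝ))) :=
  ⟨0, fun _ ⟨_k, hk⟩ => hk ▸ e2norm_nonneg' _⟩

lemma torusDist_le' {d : ℕ} (x : Fin d → ℝ) : torusDist x 0 ≤ e2norm x := by
  have := ciInf_le (torusDist_bddBelow' x 0) (0 : Fin d → ℤ)
  refine this.trans_eq ?_
  congr 1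
  funext i
  simp

lemma torusDist_iff' {d : ℕ} {δ : ℝ} (hδ : δ < 1/2)
    {y : Fin d → ℝ} (hy : ∀ i, y i ∈ Set.Ico (-(1/2):ℝ) (1/2)) :
    torusDist y 0 ≤ δ ↔ e2norm y ≤ δ := by
  constructor
  · intro h
    have hlow : min (e2norm y) (1/2) ≤ torusDist y 0 := by
      refine le_ciInf fun k => ?_
      by_cases hk : k = 0
      · subst hk
        refine min_le_of_left_le (le_of_eq ?_)
        congr 1; funext i; simp
      · obtain ⟨i, hi⟩ : ∃ i, k i ≠ 0 := by
          by_contra hc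
          push_neg at hc
          exact hk (funext hc)
        refine min_le_of_right_le ?_
        have habs : (1/2:ℝ) ≤ |y i - (0:Fin d → ℝ) i - (k i : ℝ)| := by
          simp only [Pi.zero_apply, sub_zero]
          rcases lt_or_gt_of_ne hi with h1 | h1
          · have hk1 : k i ≤ -1 := by omega
            have : (k i : ℝ) ≤ -1 := by exact_mod_cast hk1
            have := (hy i).1
            rw [abs_of_nonneg (by linarith)]
            linarith
          · have hk1 : 1 ≤ k i := h1
            have : (1:ℝ) ≤ (k i : ℝ) := by exact_mod_cast hk1
            have := (hy i).2
            rw [abs_of_nonpos (by linarith)]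
            linarith
        exact habs.trans (abs_le_e2norm' (fun j => y j - (0:Fin d → ℝ) j - (k j : ℝ)) i)
    rcases min_le_iff.mp (hlow.trans h) with h1 | h1
    · exact h1
    · linarith
  · intro h
    exact (torusDist_le' y).trans h

lemma torusDist_shift' {d : ℕ} (m : Fin d → ℤ) (x : Fin d → ℝ) :
    torusDist (fun i => (m i : ℝ) + x i) 0 = torusDist x 0 := by
  have key : (Set.range fun k : Fin d → ℤ =>
        e2norm (fun i => ((m i:ℝ) + x i) - (0:Fin d → ℝ) i - (k i:ℝ)))
      = (Set.range fun k : Fin d → ℤ =>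
        e2norm (fun i => x i - (0:Fin d → ℝ) i - (k i:ℝ))) := by
    ext r
    simp only [Set.mem_range]
    constructor
    · rintro ⟨k, rfl⟩
      exact ⟨k - m, congrArg e2norm (funext fun i => by
        simp only [Pi.zero_apply, Pi.sub_apply, Pi.add_apply]; push_cast; ring)⟩
    · rintro ⟨k, rfl⟩
      exact ⟨k + m, congrArg e2norm (funext fun i => by
        simp only [Pi.zero_apply, Pi.sub_apply, Pi.add_apply]; push_cast; ring)⟩
  rw [torusDist, torusDist, iInf, iInf, key]

lemma exp_shift' (t : ℝ) (N : ℤ) :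
    Complex.exp (-(2 * (Real.pi:ℂ) * Complex.I * ((t + (N:ℝ) : ℝ) : ℂ)))
      = Complex.exp (-(2 * (Real.pi:ℂ) * Complex.I * (t : ℂ))) := by
  rw [show -(2 * (Real.pi:ℂ) * Complex.I * ((t + (N:ℝ) : ℝ) : ℂ))
      = -(2 * (Real.pi:ℂ) * Complex.I * (t:ℂ)) + (-N : ℤ) * (2 * (Real.pi:ℂ) * Complex.I) by
    push_cast; ring]
  rw [Complex.exp_add, Complex.exp_int_mul_two_pi_mul_I, mul_one]

lemma exp_neg_two_pi_re (t : ℝ) :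
    (Complex.exp (-(2 * (Real.pi : ℂ) * Complex.I * (t : ℂ)))).re = Real.cos (2 * Real.pi * t) := by
  have h : -(2 * (Real.pi : ℂ) * Complex.I * (t : ℂ)) = ((-(2 * Real.pi * t) : ℝ) : ℂ) * Complex.I := by
    push_cast
    ring
  rw [h, Complex.exp_ofReal_mul_I_re, Real.cos_neg]

lemma exp_neg_two_pi_im (t : ℝ) :
    (Complex.exp (-(2 * (Real.pi : ℂ) * Complex.I * (t : ℂ)))).im
      = -Real.sin (2 * Real.pi * t) := by
  have h : -(2 * (Real.pi : ℂ) * Complex.I * (t : ℂ)) = ((-(2 * Real.pi * t) : ℝ) : ℂ) * Complex.I := by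
    push_cast
    ring
  rw [h, Complex.exp_ofReal_mul_I_im, Real.sin_neg]

end Aux

/-- For d ≥ 1 there are constants c₂, c₃ > 0 depending only on d such
that for every 0 < δ < 1/4, the normalized indicator g of the δ-ball on 𝕋^d has
ĝ(0) = 1 and ĝ(k) real with ĝ(k) ≥ c₂ for all k ∈ ℤ^d with 0 < ‖k‖₂ ≤ c₃/δ. -/
theorem stmt16 (d : ℕ) (hd : 1 ≤ d) :
    ∃ c₂ c₃ : ℝ, 0 < c₂ ∧ 0 < c₃ ∧
      ∀ (δ : ℝ), 0 < δ → δ < 1 / 4 →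
        ∀ g : (Fin d → ℝ) → ℝ,
          (∀ y, g y = if torusDist y 0 ≤ δ then 1 / (unitBallVol d * δ ^ d) else 0) →
          fourierCoefTd g 0 = 1 ∧
          ∀ k : Fin d → ℤ, k ≠ 0 → e2norm (fun i => (k i : ℝ)) ≤ c₃ / δ →
            (fourierCoefTd g k).im = 0 ∧ c₂ ≤ (fourierCoefTd g k).re := by
  classical
  refine ⟨1/2, 1/8, by norm_num, by norm_num, ?_⟩
  intro δ hδ0 hδ4 g hg
  set ω := unitBallVol d with hω_def
  have hω : 0 < ω :=
    ENNReal.toReal_pos (ball_vol_pos hd).ne' (ball_vol_lt_top 1).ne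
  set A : Set (Fin d → ℝ) := {v : Fin d → ℝ | e2norm v ≤ δ} with hA_def
  have hA_meas : MeasurableSet A := (ball_isClosed δ).measurableSet
  have hA_toReal : (volume A).toReal = δ ^ d * ω := by
    rw [hA_def, ball_vol hδ0, ENNReal.toReal_mul,
      ENNReal.toReal_ofReal (pow_nonneg hδ0.le _), hω_def, unitBallVol]
  have hA_fin : volume A ≠ ⊤ := (ball_vol_lt_top δ).ne
  set cδ : ℝ := 1 / (ω * δ ^ d) with hcδ_def
  have hωδ : 0 < ω * δ ^ d := mul_pos hω (pow_pos hδ0 d)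
  have hcδ : 0 < cδ := by positivity
  have hcvol : cδ * (volume A).toReal = 1 := by
    rw [hA_toReal, hcδ_def]
    field_simp
  -- A is contained in the shifted cube
  have hA_sub : A ⊆ Set.univ.pi fun _ : Fin d => Set.Ico (-(1/2):ℝ) (1/2) := by
    intro v hv i _
    have h1 := abs_le.mp ((abs_le_e2norm' v i).trans hv)
    constructor <;> [linarith [h1.1]; linarith [h1.2]]
  -- the master formula
  have master : ∀ k : Fin d → ℤ,
      fourierCoefTd g k = ∫ y in A, (cδ : ℂ) *
        Complex.exp (-(2 * (Real.pi : ℂ) * Complex.I * ((∑ i, (k i : ℝ) * y i : ℝ) : ℂ))) := by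
    intro k
    set E : (Fin d → ℝ) → ℂ := fun y =>
      Complex.exp (-(2 * (Real.pi : ℂ) * Complex.I * ((∑ i, (k i : ℝ) * y i : ℝ) : ℂ))) with hE_def
    set F : (Fin d → ℝ) → ℂ := fun y => (g y : ℂ) * E y with hF_def
    have hFinv : ∀ (m : Fin d → ℤ) (x : Fin d → ℝ), F (fun i => (m i : ℝ) + x i) = F x := by
      intro m x
      have hgshift : g (fun i => (m i : ℝ) + x i) = g x := by
        rw [hg, hg, torusDist_shift']
      have hEshift : E (fun i => (m i : ℝ) + x i) = E x := by
        have hθ : (∑ i, (k i:ℝ) * ((m i:ℝ) + x i))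
            = (∑ i, (k i:ℝ) * x i) + ((∑ i, k i * m i : ℤ) : ℝ) := by
          push_cast
          rw [← Finset.sum_add_distrib]
          exact Finset.sum_congr rfl fun i _ => by ring
        simp only [hE_def]
        rw [hθ]
        exact exp_shift' _ _
      simp only [hF_def, hgshift, hEshift]
    have step1 : fourierCoefTd g k
        = ∫ y in (Set.univ.pi fun _ : Fin d => Set.Ico (-(1/2):ℝ) (1/2)), F y :=
      shift_domain F hFinv
    have step2 : ∫ y in (Set.univ.pi fun _ : Fin d => Set.Ico (-(1/2):ℝ) (1/2)), F y
        = ∫ y in (Set.univ.pi fun _ : Fin d => Set.Ico (-(1/2):ℝ) (1/2)),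
            A.indicator (fun y => (cδ : ℂ) * E y) y := by
      refine setIntegral_congr_fun (MeasurableSet.univ_pi fun _ => measurableSet_Ico) ?_
      intro y hy
      have hy' : ∀ i, y i ∈ Set.Ico (-(1/2):ℝ) (1/2) := fun i => hy i (Set.mem_univ i)
      have hiff := torusDist_iff' (by linarith : δ < 1/2) hy'
      by_cases hyA : y ∈ A
      · rw [Set.indicator_of_mem hyA]
        show (g y : ℂ) * E y = (cδ : ℂ) * E y
        have : g y = cδ := by rw [hg, if_pos (hiff.mpr hyA)]
        rw [this]
      · rw [Set.indicator_of_notMem hyA]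
        show (g y : ℂ) * E y = 0
        have : g y = 0 := by
          rw [hg, if_neg]
          intro hc
          exact hyA (hiff.mp hc)
        rw [this]
        simp
    have step3 : ∫ y in (Set.univ.pi fun _ : Fin d => Set.Ico (-(1/2):ℝ) (1/2)),
            A.indicator (fun y => (cδ : ℂ) * E y) y
        = ∫ y in A, (cδ : ℂ) * E y := by
      rw [setIntegral_indicator hA_meas,
        Set.inter_eq_self_of_subset_right hA_sub]
    rw [step1, step2, step3]
  constructor
  · -- k = 0
    rw [master 0]
    have h1 : ∀ y : Fin d → ℝ, (cδ : ℂ) *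
        Complex.exp (-(2 * (Real.pi : ℂ) * Complex.I *
          ((∑ i, ((0 : Fin d → ℤ) i : ℝ) * y i : ℝ) : ℂ))) = (cδ : ℂ) := by
      intro y
      simp
    rw [setIntegral_congr_fun hA_meas fun y _ => h1 y]
    rw [setIntegral_const]
    rw [Complex.real_smul, ← Complex.ofReal_mul, mul_comm, Measure.real, hcvol, Complex.ofReal_one]
  · -- k ≠ 0
    intro k _hk0 hknorm
    set θ : (Fin d → ℝ) → ℝ := fun y => ∑ i, (k i : ℝ) * y i with hθ_def
    have hθcont : Continuous θ :=
      continuous_finset_sum _ fun i _ => continuous_const.mul (continuous_apply i)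
    have hint : IntegrableOn (fun y => (cδ : ℂ) *
        Complex.exp (-(2 * (Real.pi : ℂ) * Complex.I * ((θ y : ℝ) : ℂ)))) A volume := by
      refine ContinuousOn.integrableOn_compact (ball_isCompact δ) ?_
      refine Continuous.continuousOn ?_
      exact continuous_const.mul (Complex.continuous_exp.comp
        ((continuous_const.mul (Complex.continuous_ofReal.comp hθcont)).neg))
    have hθ_bound : ∀ y ∈ A, |θ y| ≤ 1/8 := by
      intro y hyA
      have h1 : |θ y| ≤ e2norm (fun i => (k i : ℝ)) * e2norm y := e2norm_cauchy _ _
      have h2 : e2norm (fun i => (k i : ℝ)) * e2norm y ≤ ((1/8)/δ) * δ := by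
        have := e2norm_nonneg' y
        have h3 : e2norm y ≤ δ := hyA
        have h4 : (0:ℝ) ≤ e2norm (fun i => (k i : ℝ)) := e2norm_nonneg' _
        calc e2norm (fun i => (k i : ℝ)) * e2norm y
            ≤ ((1/8)/δ) * e2norm y := by
              exact mul_le_mul_of_nonneg_right hknorm this
          _ ≤ ((1/8)/δ) * δ := by
              refine mul_le_mul_of_nonneg_left h3 (by positivity)
      rw [div_mul_cancel₀] at h2
      · linarith
      · exact hδ0.ne'
    have hcos : ∀ y ∈ A, (1/2 : ℝ) ≤ Real.cos (2 * Real.pi * θ y) := by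
      intro y hyA
      have hb := hθ_bound y hyA
      have hπ4 : Real.pi ≤ 4 := by
        linarith [Real.pi_le_four]
      have habs : |2 * Real.pi * θ y| ≤ 1 := by
        rw [abs_mul, abs_of_nonneg (by positivity : (0:ℝ) ≤ 2 * Real.pi)]
        calc 2 * Real.pi * |θ y| ≤ 2 * 4 * (1/8) := by
              have := Real.pi_pos
              have h0 : (0:ℝ) ≤ |θ y| := abs_nonneg _
              nlinarith
          _ = 1 := by norm_num
      have hsq : (2 * Real.pi * θ y)^2 ≤ 1 := by
        have h0 : (0:ℝ) ≤ |2 * Real.pi * θ y| := abs_nonneg _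
        nlinarith [sq_abs (2 * Real.pi * θ y)]
      calc (1/2 : ℝ) = 1 - 1/2 := by norm_num
        _ ≤ 1 - (2 * Real.pi * θ y)^2 / 2 := by linarith
        _ ≤ Real.cos (2 * Real.pi * θ y) := Real.one_sub_sq_div_two_le_cos
    have him : (∫ y in A, (cδ : ℂ) *
        Complex.exp (-(2 * (Real.pi : ℂ) * Complex.I * ((θ y : ℝ) : ℂ)))).im = 0 := by
      have him2 : (∫ y in A, (cδ : ℂ) *
          Complex.exp (-(2 * (Real.pi : ℂ) * Complex.I * ((θ y : ℝ) : ℂ)))).im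
          = ∫ y in A, ((cδ : ℂ) *
            Complex.exp (-(2 * (Real.pi : ℂ) * Complex.I * ((θ y : ℝ) : ℂ)))).im :=
        (Complex.imCLM.integral_comp_comm hint).symm
      rw [him2]
      have hptw : ∀ y : Fin d → ℝ, ((cδ : ℂ) *
          Complex.exp (-(2 * (Real.pi : ℂ) * Complex.I * ((θ y : ℝ) : ℂ)))).im
          = cδ * (-Real.sin (2 * Real.pi * θ y)) := by
        intro y
        rw [Complex.mul_im]
        rw [Complex.ofReal_re, Complex.ofReal_im, exp_neg_two_pi_im]
        ring
      rw [integral_congr_ae (Filter.Eventually.of_forall fun y => hptw y)]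
      have hodd : (∫ y in A, Real.sin (2 * Real.pi * θ y)) = 0 := by
        set u : (Fin d → ℝ) → ℝ := fun y => Real.sin (2 * Real.pi * θ y) with hu_def
        have hAneg : ∀ y : Fin d → ℝ, -y ∈ A ↔ y ∈ A := by
          intro y
          show e2norm (-y) ≤ δ ↔ e2norm y ≤ δ
          rw [show (-y) = fun i => -(y i) from rfl, e2norm_neg']
        have h1 : (∫ x, (A.indicator u) (-x)) = ∫ x, A.indicator u x :=
          integral_neg_eq_self _ _
        have h2 : (fun x => (A.indicator u) (-x)) = fun x => -(A.indicator u x) := by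
          funext x
          by_cases hx : x ∈ A
          · rw [Set.indicator_of_mem ((hAneg x).mpr hx), Set.indicator_of_mem hx]
            show Real.sin (2 * Real.pi * θ (-x)) = -Real.sin (2 * Real.pi * θ x)
            have : θ (-x) = -θ x := by
              simp only [hθ_def]
              rw [← Finset.sum_neg_distrib]
              exact Finset.sum_congr rfl fun i _ => by
                show (k i : ℝ) * (-x) i = -((k i : ℝ) * x i)
                simp [Pi.neg_apply]
            rw [this]
            rw [mul_neg, Real.sin_neg]
          · rw [Set.indicator_of_notMem (fun hc => hx ((hAneg x).mp hc)),
              Set.indicator_of_notMem hx, neg_zero]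
        rw [h2, integral_neg] at h1
        have h3 : (∫ x, A.indicator u x) = 0 := by linarith
        rw [← integral_indicator hA_meas]
        exact h3
      have : (∫ y in A, cδ * (-Real.sin (2 * Real.pi * θ y)))
          = -cδ * ∫ y in A, Real.sin (2 * Real.pi * θ y) := by
        rw [← integral_const_mul]
        exact integral_congr_ae (Filter.Eventually.of_forall fun y => by ring)
      rw [this, hodd, mul_zero]
    have hre : (1/2 : ℝ) ≤ (∫ y in A, (cδ : ℂ) *
        Complex.exp (-(2 * (Real.pi : ℂ) * Complex.I * ((θ y : ℝ) : ℂ)))).re := by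
      have hre2 : (∫ y in A, (cδ : ℂ) *
          Complex.exp (-(2 * (Real.pi : ℂ) * Complex.I * ((θ y : ℝ) : ℂ)))).re
          = ∫ y in A, ((cδ : ℂ) *
            Complex.exp (-(2 * (Real.pi : ℂ) * Complex.I * ((θ y : ℝ) : ℂ)))).re :=
        (Complex.reCLM.integral_comp_comm hint).symm
      rw [hre2]
      have hptw : ∀ y : Fin d → ℝ, ((cδ : ℂ) *
          Complex.exp (-(2 * (Real.pi : ℂ) * Complex.I * ((θ y : ℝ) : ℂ)))).re
          = cδ * Real.cos (2 * Real.pi * θ y) := by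
        intro y
        rw [Complex.mul_re]
        rw [Complex.ofReal_re, Complex.ofReal_im, exp_neg_two_pi_re]
        ring
      rw [integral_congr_ae (Filter.Eventually.of_forall fun y => hptw y)]
      have hintre : IntegrableOn (fun y => cδ * Real.cos (2 * Real.pi * θ y)) A volume := by
        refine ContinuousOn.integrableOn_compact (ball_isCompact δ) ?_
        exact (continuous_const.mul (Real.continuous_cos.comp
          (continuous_const.mul hθcont))).continuousOn
      have hge : ∀ y ∈ A, cδ * (1/2) ≤ cδ * Real.cos (2 * Real.pi * θ y) := fun y hy =>
        mul_le_mul_of_nonneg_left (hcos y hy) hcδ.le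
      have := setIntegral_ge_of_const_le_real hA_meas hA_fin hge hintre
      calc (1/2 : ℝ) = cδ * (1/2) * (volume A).toReal := by
            rw [show cδ * (1/2) * (volume A).toReal = (1/2) * (cδ * (volume A).toReal) by ring,
              hcvol, mul_one]
        _ ≤ _ := this
    rw [master k]
    exact ⟨him, hre⟩
end
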